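/- arXiv:1307.4383 — 8 statements merged into one kernel-verified Lean document; each statement's English description precedes it below -/
import Mathlib

section
/- If ω, ω' : Z → Y are two z-linear maps inducing equivalent exact sequences of Banach spaces, then their difference ω − ω' can be written as B + L where B : Z → Y is a homogeneous bounded map and L : Z → Y is a linear map; conversely, if ω − ω' = B + L with B homogeneous bounded and L linear, then the induced exact sequences are equivalent. -/
open scoped BigOperators

noncomputable section

/-- A homogeneous map between Banach spaces. -/
def IsHomog {X Y : Type*} [NormedAddCommGroup X] [NormedSpace ℝ X]
    [NormedAddCommGroup Y] [NormedSpace ℝ Y] (f : X → Y) : Prop :=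
  ∀ (c : ℝ) (x : X), f (c • x) = c • f x

/-- `f` satisfies the z-linearity estimate with constant `C`. -/
def ZlinWith {X Y : Type*} [NormedAddCommGroup X] [NormedSpace ℝ X]
    [NormedAddCommGroup Y] [NormedSpace ℝ Y] (f : X → Y) (C : ℝ) : Prop :=
  ∀ (n : ℕ) (x : Fin n → X),
    ‖f (∑ j, x j) - ∑ j, f (x j)‖ ≤ C * ∑ j, ‖x j‖

/-- A z-linear map. -/
def IsZlin {X Y : Type*} [NormedAddCommGroup X] [NormedSpace ℝ X]
    [NormedAddCommGroup Y] [NormedSpace ℝ Y] (f : X → Y) : Prop :=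
  IsHomog f ∧ ∃ C > 0, ZlinWith f C

/-- The z-linearity constant `Z(f)`. -/
noncomputable def zconst {X Y : Type*} [NormedAddCommGroup X] [NormedSpace ℝ X]
    [NormedAddCommGroup Y] [NormedSpace ℝ Y] (f : X → Y) : ℝ :=
  sInf {C : ℝ | 0 ≤ C ∧ ZlinWith f C}

/-- `0 → Y → X → Z → 0` is an exact sequence of Banach spaces. -/
def IsExactSeq {Y X Z : Type*} [NormedAddCommGroup Y] [NormedSpace ℝ Y]
    [NormedAddCommGroup X] [NormedSpace ℝ X]
    [NormedAddCommGroup Z] [NormedSpace ℝ Z]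
    (i : Y →L[ℝ] X) (q : X →L[ℝ] Z) : Prop :=
  Function.Injective i ∧ Function.Surjective q ∧
    LinearMap.range (i : Y →ₗ[ℝ] X) = LinearMap.ker (q : X →ₗ[ℝ] Z)

/-- `ω` is a z-linear map associated with the exact sequence `0 → Y → X → Z → 0`:
it is the difference of a bounded homogeneous selection and a linear selection
of the quotient map. -/
def IsAssoc {Y X Z : Type*} [NormedAddCommGroup Y] [NormedSpace ℝ Y]
    [NormedAddCommGroup X] [NormedSpace ℝ X]
    [NormedAddCommGroup Z] [NormedSpace ℝ Z]
    (ω : Z → Y) (i : Y →L[ℝ] X) (q : X →L[ℝ] Z) : Prop :=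
  IsExactSeq i q ∧
    ∃ (b : Z → X) (l : Z →ₗ[ℝ] X), IsHomog b ∧ (∃ M : ℝ, ∀ z, ‖b z‖ ≤ M * ‖z‖) ∧
      (∀ z, q (b z) = z) ∧ (∀ z, q (l z) = z) ∧ (∀ z, i (ω z) = b z - l z)

/-- Equivalence of two exact sequences with the same subspace and quotient. -/
def SeqEquiv {Y X X' Z : Type*} [NormedAddCommGroup Y] [NormedSpace ℝ Y]
    [NormedAddCommGroup X] [NormedSpace ℝ X]
    [NormedAddCommGroup X'] [NormedSpace ℝ X']
    [NormedAddCommGroup Z] [NormedSpace ℝ Z]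
    (i : Y →L[ℝ] X) (q : X →L[ℝ] Z) (i' : Y →L[ℝ] X') (q' : X' →L[ℝ] Z) : Prop :=
  ∃ T : X →L[ℝ] X', (∀ y, T (i y) = i' y) ∧ (∀ x, q' (T x) = q x)

/-- The exact sequence `0 → Y → X → Z → 0` splits. -/
def Splits {Y X Z : Type*} [NormedAddCommGroup Y] [NormedSpace ℝ Y]
    [NormedAddCommGroup X] [NormedSpace ℝ X]
    [NormedAddCommGroup Z] [NormedSpace ℝ Z]
    (i : Y →L[ℝ] X) (q : X →L[ℝ] Z) : Prop :=
  ∃ r : Z →L[ℝ] X, ∀ z, q (r z) = z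

/-- The exact sequence `0 → Y → X → Z → 0` locally splits: its dual sequence
`0 → Z* → X* → Y* → 0` splits, i.e. the dual `i*` of the embedding admits a
bounded linear section. -/
def LocSplits {Y X Z : Type*} [NormedAddCommGroup Y] [NormedSpace ℝ Y]
    [NormedAddCommGroup X] [NormedSpace ℝ X]
    [NormedAddCommGroup Z] [NormedSpace ℝ Z]
    (i : Y →L[ℝ] X) (q : X →L[ℝ] Z) : Prop :=
  ∃ s : StrongDual ℝ Y →L[ℝ] StrongDual ℝ X,
    ∀ (g : StrongDual ℝ Y) (y : Y), s g (i y) = g y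

/-- The λ-bounded approximation property. -/
def HasBAPWith (X : Type*) [NormedAddCommGroup X] [NormedSpace ℝ X] (l : ℝ) : Prop :=
  ∀ F : Submodule ℝ X, FiniteDimensional ℝ F →
    ∃ T : X →L[ℝ] X, FiniteDimensional ℝ (LinearMap.range (T : X →ₗ[ℝ] X)) ∧
      ‖T‖ ≤ l ∧ ∀ f ∈ F, T f = f

/-- The bounded approximation property. -/
def HasBAP (X : Type*) [NormedAddCommGroup X] [NormedSpace ℝ X] : Prop :=
  ∃ l : ℝ, 1 ≤ l ∧ HasBAPWith X l

/-- A Lindenstrauss–Pełczyński `𝓛₁`-space. -/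
def IsL1Space (E : Type*) [NormedAddCommGroup E] [NormedSpace ℝ E] : Prop :=
  ∃ l : ℝ, 1 ≤ l ∧ ∀ F : Submodule ℝ E, FiniteDimensional ℝ F →
    ∃ G : Submodule ℝ E, F ≤ G ∧ FiniteDimensional ℝ G ∧
      ∃ (n : ℕ) (T : G ≃L[ℝ] PiLp 1 fun _ : Fin n => ℝ),
        ‖T.toContinuousLinearMap‖ * ‖T.symm.toContinuousLinearMap‖ ≤ l

/-- A Lindenstrauss–Pełczyński `𝓛∞`-space. -/
def IsLinftySpace (E : Type*) [NormedAddCommGroup E] [NormedSpace ℝ E] : Prop :=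
  ∃ l : ℝ, 1 ≤ l ∧ ∀ F : Submodule ℝ E, FiniteDimensional ℝ F →
    ∃ G : Submodule ℝ E, F ≤ G ∧ FiniteDimensional ℝ G ∧
      ∃ (n : ℕ) (T : G ≃L[ℝ] PiLp ⊤ fun _ : Fin n => ℝ),
        ‖T.toContinuousLinearMap‖ * ‖T.symm.toContinuousLinearMap‖ ≤ l

/-- Antilipschitz bound for an injective continuous linear map with closed range. -/
theorem myAntilip {Y X : Type*} [NormedAddCommGroup Y] [NormedSpace ℝ Y] [CompleteSpace Y]
    [NormedAddCommGroup X] [NormedSpace ℝ X] [CompleteSpace X]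
    (i : Y →L[ℝ] X) (hinj : Function.Injective i)
    (hclosed : IsClosed ((LinearMap.range (i : Y →ₗ[ℝ] X)) : Set X)) :
    ∃ C : ℝ, 0 ≤ C ∧ ∀ y, ‖y‖ ≤ C * ‖i y‖ := by
  set N := LinearMap.range (i : Y →ₗ[ℝ] X)
  haveI : CompleteSpace N := hclosed.completeSpace_coe
  set e0 : Y →L[ℝ] N := i.codRestrict N (fun y => LinearMap.mem_range_self _ y) with he0
  have hk : LinearMap.ker (e0 : Y →ₗ[ℝ] N) = ⊥ := by
    rw [Submodule.eq_bot_iff]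
    intro a ha
    have h0 : e0 a = 0 := ha
    have : i a = 0 := congrArg Subtype.val h0
    exact hinj (by simpa using this)
  have hs : LinearMap.range (e0 : Y →ₗ[ℝ] N) = ⊤ := by
    rw [LinearMap.range_eq_top]
    rintro ⟨x, hx⟩
    obtain ⟨y, hy⟩ := hx
    exact ⟨y, by ext; simpa [e0] using hy⟩
  let e := ContinuousLinearEquiv.ofBijective e0 hk hs
  refine ⟨‖(e.symm : N →L[ℝ] Y)‖, norm_nonneg _, fun y => ?_⟩
  have h1 : y = e.symm (e y) := (e.symm_apply_apply y).symm
  calc ‖y‖ = ‖e.symm (e y)‖ := by rw [← h1]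
    _ ≤ ‖(e.symm : N →L[ℝ] Y)‖ * ‖e y‖ := (e.symm : N →L[ℝ] Y).le_opNorm _
    _ = ‖(e.symm : N →L[ℝ] Y)‖ * ‖i y‖ := rfl

/-- Two z-linear maps induce equivalent exact sequences iff their difference is
the sum of a bounded homogeneous map and a linear map. -/
theorem statement0 {Y Z X X' : Type*}
    [NormedAddCommGroup Y] [NormedSpace ℝ Y] [CompleteSpace Y]
    [NormedAddCommGroup Z] [NormedSpace ℝ Z] [CompleteSpace Z]
    [NormedAddCommGroup X] [NormedSpace ℝ X] [CompleteSpace X]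
    [NormedAddCommGroup X'] [NormedSpace ℝ X'] [CompleteSpace X']
    (ω ω' : Z → Y) (hω : IsZlin ω) (hω' : IsZlin ω')
    (i : Y →L[ℝ] X) (q : X →L[ℝ] Z) (i' : Y →L[ℝ] X') (q' : X' →L[ℝ] Z)
    (h : IsAssoc ω i q) (h' : IsAssoc ω' i' q') :
    SeqEquiv i q i' q' ↔
      ∃ B L : Z → Y, IsHomog B ∧ (∃ M : ℝ, ∀ z, ‖B z‖ ≤ M * ‖z‖) ∧
        IsLinearMap ℝ L ∧ ∀ z, ω z - ω' z = B z + L z := by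
  obtain ⟨⟨hiinj, hqsurj, hrange⟩, b, l, hbhom, ⟨M0, hbM0⟩, hqb, hql, hibl⟩ := h
  obtain ⟨⟨hiinj', hqsurj', hrange'⟩, b', l', hbhom', ⟨M0', hbM0'⟩, hqb', hql', hibl'⟩ := h'
  -- nonnegative bound constants
  set M : ℝ := max M0 0 with hMdef
  have hM0le : (0:ℝ) ≤ M := le_max_right _ _
  have hbM : ∀ z, ‖b z‖ ≤ M * ‖z‖ := fun z =>
    (hbM0 z).trans (mul_le_mul_of_nonneg_right (le_max_left _ _) (norm_nonneg _))
  set M' : ℝ := max M0' 0 with hM'def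
  have hM'0le : (0:ℝ) ≤ M' := le_max_right _ _
  have hbM' : ∀ z, ‖b' z‖ ≤ M' * ‖z‖ := fun z =>
    (hbM0' z).trans (mul_le_mul_of_nonneg_right (le_max_left _ _) (norm_nonneg _))
  -- closedness of ranges
  have hclosed : IsClosed ((LinearMap.range (i : Y →ₗ[ℝ] X)) : Set X) := by
    rw [hrange]; exact ContinuousLinearMap.isClosed_ker q
  have hclosed' : IsClosed ((LinearMap.range (i' : Y →ₗ[ℝ] X')) : Set X') := by
    rw [hrange']; exact ContinuousLinearMap.isClosed_ker q'
  obtain ⟨C, hC0, hC⟩ := myAntilip i hiinj hclosed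
  obtain ⟨C', hC'0, hC'⟩ := myAntilip i' hiinj' hclosed'
  -- membership helpers
  have hmemi : ∀ x : X, q x = 0 → ∃ y, i y = x := by
    intro x hx
    have : x ∈ LinearMap.ker (q : X →ₗ[ℝ] Z) := hx
    rw [← hrange] at this
    exact this
  have hmemi' : ∀ x : X', q' x = 0 → ∃ y, i' y = x := by
    intro x hx
    have : x ∈ LinearMap.ker (q' : X' →ₗ[ℝ] Z) := hx
    rw [← hrange'] at this
    exact this
  have hqi : ∀ y, q (i y) = 0 := by
    intro y
    have : i y ∈ LinearMap.ker (q : X →ₗ[ℝ] Z) := by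
      rw [← hrange]; exact LinearMap.mem_range_self _ y
    exact this
  have hqi' : ∀ y, q' (i' y) = 0 := by
    intro y
    have : i' y ∈ LinearMap.ker (q' : X' →ₗ[ℝ] Z) := by
      rw [← hrange']; exact LinearMap.mem_range_self _ y
    exact this
  constructor
  · -- forward direction
    rintro ⟨T, hTi, hTq⟩
    have hmB : ∀ z, ∃ y, i' y = T (b z) - b' z := by
      intro z
      refine hmemi' _ ?_
      rw [map_sub, hTq, hqb, hqb', sub_self]
    have hmL : ∀ z, ∃ y, i' y = l' z - T (l z) := by
      intro z
      refine hmemi' _ ?_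
      rw [map_sub, hTq, hql, hql', sub_self]
    set B : Z → Y := fun z => (hmB z).choose with hBdef
    have hB : ∀ z, i' (B z) = T (b z) - b' z := fun z => (hmB z).choose_spec
    set L : Z → Y := fun z => (hmL z).choose with hLdef
    have hL : ∀ z, i' (L z) = l' z - T (l z) := fun z => (hmL z).choose_spec
    refine ⟨B, L, ?_, ?_, ?_, ?_⟩
    · -- homogeneous
      intro c z
      apply hiinj'
      rw [map_smul, hB, hB, hbhom, hbhom', map_smul, smul_sub]
    · -- bounded
      refine ⟨C' * (‖T‖ * M + M'), fun z => ?_⟩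
      have h1 : ‖B z‖ ≤ C' * ‖i' (B z)‖ := hC' _
      have h2 : ‖i' (B z)‖ ≤ ‖T‖ * M * ‖z‖ + M' * ‖z‖ := by
        rw [hB]
        calc ‖T (b z) - b' z‖ ≤ ‖T (b z)‖ + ‖b' z‖ := norm_sub_le _ _
          _ ≤ ‖T‖ * ‖b z‖ + M' * ‖z‖ := add_le_add (T.le_opNorm _) (hbM' z)
          _ ≤ ‖T‖ * (M * ‖z‖) + M' * ‖z‖ :=
              add_le_add_left (mul_le_mul_of_nonneg_left (hbM z) (norm_nonneg T)) _
          _ = ‖T‖ * M * ‖z‖ + M' * ‖z‖ := by ring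
      calc ‖B z‖ ≤ C' * ‖i' (B z)‖ := h1
        _ ≤ C' * (‖T‖ * M * ‖z‖ + M' * ‖z‖) := mul_le_mul_of_nonneg_left h2 hC'0
        _ = C' * (‖T‖ * M + M') * ‖z‖ := by ring
    · -- linear
      refine ⟨?_, ?_⟩
      · intro z w
        apply hiinj'
        rw [map_add i' (L z) (L w)]
        simp only [hL, map_add]
        abel
      · intro c z
        apply hiinj'
        rw [map_smul i' c (L z)]
        simp only [hL, map_smul, smul_sub]
    · -- difference identity
      intro z
      apply hiinj'
      have e1 : i' (ω z) = T (b z) - T (l z) := by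
        rw [← hTi (ω z), hibl, map_sub]
      rw [map_sub, map_add, e1, hibl', hB, hL]
      abel
  · -- reverse direction
    rintro ⟨B, L, hBhom, ⟨MB0, hMB0⟩, hLlin, hdiff⟩
    set MB : ℝ := max MB0 0 with hMBdef
    have hMB0le : (0:ℝ) ≤ MB := le_max_right _ _
    have hMB : ∀ z, ‖B z‖ ≤ MB * ‖z‖ := fun z =>
      (hMB0 z).trans (mul_le_mul_of_nonneg_right (le_max_left _ _) (norm_nonneg _))
    -- the partial inverse of i
    have hmι : ∀ x : X, ∃ y, i y = x - l (q x) := by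
      intro x
      refine hmemi _ ?_
      rw [map_sub, hql, sub_self]
    set ι : X → Y := fun x => (hmι x).choose with hιdef
    have hι : ∀ x, i (ι x) = x - l (q x) := fun x => (hmι x).choose_spec
    have hιadd : ∀ x x', ι (x + x') = ι x + ι x' := by
      intro x x'
      apply hiinj
      rw [map_add i (ι x) (ι x')]
      simp only [hι, map_add]
      abel
    have hιsmul : ∀ (c : ℝ) (x : X), ι (c • x) = c • ι x := by
      intro c x
      apply hiinj
      rw [map_smul i c (ι x)]
      simp only [hι, map_smul, smul_sub]
    set Tfun : X → X' := fun x => i' (ι x - L (q x)) + l' (q x) with hTfundef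
    have hLz : ∀ z, L z = ω z - ω' z - B z := fun z => eq_sub_of_add_eq' (hdiff z).symm
    have hT2 : ∀ x, Tfun x = i' (ι x - ω (q x)) + (i' (B (q x)) + b' (q x)) := by
      intro x
      simp only [Tfun]
      rw [hLz (q x)]
      simp only [map_sub]
      rw [hibl' (q x)]
      abel
    set Tlin : X →ₗ[ℝ] X' :=
      { toFun := Tfun
        map_add' := by
          intro x x'
          simp only [Tfun, map_add, map_sub, hιadd, hLlin.map_add]
          abel
        map_smul' := by
          intro c x
          simp only [Tfun, map_smul, map_sub, hιsmul, hLlin.map_smul, RingHom.id_apply,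
            smul_sub, smul_add] } with hTlindef
    -- boundedness
    set K : ℝ := ‖i'‖ * (C * (1 + M * ‖q‖)) + ‖i'‖ * (MB * ‖q‖) + M' * ‖q‖ with hKdef
    have hbound : ∀ x, ‖Tlin x‖ ≤ K * ‖x‖ := by
      intro x
      have hzx : ‖q x‖ ≤ ‖q‖ * ‖x‖ := q.le_opNorm x
      have h2 : i (ι x - ω (q x)) = x - b (q x) := by
        rw [map_sub, hι, hibl]
        abel
      have h1 : ‖ι x - ω (q x)‖ ≤ C * (1 + M * ‖q‖) * ‖x‖ := by
        calc ‖ι x - ω (q x)‖ ≤ C * ‖i (ι x - ω (q x))‖ := hC _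
          _ = C * ‖x - b (q x)‖ := by rw [h2]
          _ ≤ C * (‖x‖ + M * (‖q‖ * ‖x‖)) := by
              refine mul_le_mul_of_nonneg_left ?_ hC0
              calc ‖x - b (q x)‖ ≤ ‖x‖ + ‖b (q x)‖ := norm_sub_le _ _
                _ ≤ ‖x‖ + M * ‖q x‖ := add_le_add_right (hbM _) _
                _ ≤ ‖x‖ + M * (‖q‖ * ‖x‖) :=
                    add_le_add_right (mul_le_mul_of_nonneg_left hzx hM0le) _
          _ = C * (1 + M * ‖q‖) * ‖x‖ := by ring
      have hBb : ‖B (q x)‖ ≤ MB * ‖q‖ * ‖x‖ := by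
        calc ‖B (q x)‖ ≤ MB * ‖q x‖ := hMB _
          _ ≤ MB * (‖q‖ * ‖x‖) := mul_le_mul_of_nonneg_left hzx hMB0le
          _ = MB * ‖q‖ * ‖x‖ := by ring
      have hb'b : ‖b' (q x)‖ ≤ M' * ‖q‖ * ‖x‖ := by
        calc ‖b' (q x)‖ ≤ M' * ‖q x‖ := hbM' _
          _ ≤ M' * (‖q‖ * ‖x‖) := mul_le_mul_of_nonneg_left hzx hM'0le
          _ = M' * ‖q‖ * ‖x‖ := by ring
      have hTx : (Tlin x : X') = i' (ι x - ω (q x)) + (i' (B (q x)) + b' (q x)) := hT2 x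
      rw [hTx]
      have a1 : ‖i' (ι x - ω (q x))‖ ≤ ‖i'‖ * (C * (1 + M * ‖q‖)) * ‖x‖ := by
        calc ‖i' (ι x - ω (q x))‖ ≤ ‖i'‖ * ‖ι x - ω (q x)‖ := i'.le_opNorm _
          _ ≤ ‖i'‖ * (C * (1 + M * ‖q‖) * ‖x‖) := mul_le_mul_of_nonneg_left h1 (norm_nonneg _)
          _ = ‖i'‖ * (C * (1 + M * ‖q‖)) * ‖x‖ := by ring
      have a2 : ‖i' (B (q x))‖ ≤ ‖i'‖ * (MB * ‖q‖) * ‖x‖ := by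
        calc ‖i' (B (q x))‖ ≤ ‖i'‖ * ‖B (q x)‖ := i'.le_opNorm _
          _ ≤ ‖i'‖ * (MB * ‖q‖ * ‖x‖) := mul_le_mul_of_nonneg_left hBb (norm_nonneg _)
          _ = ‖i'‖ * (MB * ‖q‖) * ‖x‖ := by ring
      calc ‖i' (ι x - ω (q x)) + (i' (B (q x)) + b' (q x))‖
          ≤ ‖i' (ι x - ω (q x))‖ + (‖i' (B (q x))‖ + ‖b' (q x)‖) :=
            (norm_add_le _ _).trans (add_le_add_right (norm_add_le _ _) _)
        _ ≤ ‖i'‖ * (C * (1 + M * ‖q‖)) * ‖x‖ + (‖i'‖ * (MB * ‖q‖) * ‖x‖ + M' * ‖q‖ * ‖x‖) :=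
            add_le_add a1 (add_le_add a2 hb'b)
        _ = K * ‖x‖ := by rw [hKdef]; ring
    refine ⟨Tlin.mkContinuous K hbound, ?_, ?_⟩
    · intro y
      show Tfun (i y) = i' y
      have hq0 : q (i y) = 0 := hqi y
      have hιi : ι (i y) = y := by
        apply hiinj
        rw [hι, hq0, map_zero, sub_zero]
      rw [hTfundef]
      simp only [hq0, hιi, hLlin.map_zero, map_zero, sub_zero, add_zero]
    · intro x
      show q' (Tfun x) = q x
      rw [hTfundef]
      simp only [map_add, hqi', hql', zero_add]

end
end

section
/- For a z-linear map ω : Z → Y, the quasi-norm ‖(y,z)‖_ω = ‖y − ωz‖ + ‖z‖ on Y × Z is equivalent to a norm, and the maps j(y) = (y,0) and p(y,z) = z realize an exact sequence 0 → Y → Y ⊕_ω Z → Z → 0 of Banach spaces. -/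
open scoped BigOperators

noncomputable section

namespace Statement1Aux

variable {Y Z : Type*} [NormedAddCommGroup Y] [NormedSpace ℝ Y]
  [NormedAddCommGroup Z] [NormedSpace ℝ Z]

/-- The quasi-norm. -/
def qn (ω : Z → Y) (p : Y × Z) : ℝ := ‖p.1 - ω p.2‖ + ‖p.2‖

lemma qn_nonneg (ω : Z → Y) (p : Y × Z) : 0 ≤ qn ω p :=
  add_nonneg (norm_nonneg _) (norm_nonneg _)

lemma homog_zero {ω : Z → Y} (h : IsHomog ω) : ω 0 = 0 := by
  have := h 0 0; simpa using this

lemma qn_zero {ω : Z → Y} (h : IsHomog ω) : qn ω 0 = 0 := by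
  simp [qn, homog_zero h]

lemma qn_smul {ω : Z → Y} (h : IsHomog ω) (c : ℝ) (p : Y × Z) :
    qn ω (c • p) = |c| * qn ω p := by
  have h1 : (c • p).1 = c • p.1 := rfl
  have h2 : (c • p).2 = c • p.2 := rfl
  simp only [qn, h1, h2, h c p.2]
  rw [← smul_sub, norm_smul, norm_smul, Real.norm_eq_abs, mul_add]

lemma zlin2 {ω : Z → Y} {C : ℝ} (h : ZlinWith ω C) (a b : Z) :
    ‖ω (a + b) - ω a - ω b‖ ≤ C * (‖a‖ + ‖b‖) := by
  have := h 2 ![a, b]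
  simpa [Fin.sum_univ_two, sub_sub] using this

lemma qn_sum {ω : Z → Y} {C : ℝ} (hC : 0 ≤ C) (h : ZlinWith ω C)
    (n : ℕ) (q : Fin n → Y × Z) :
    qn ω (∑ i, q i) ≤ (2 + C) * ∑ i, qn ω (q i) := by
  have hfst : (∑ i, q i).1 = ∑ i, (q i).1 := by
    simp [Prod.fst_sum]
  have hsnd : (∑ i, q i).2 = ∑ i, (q i).2 := by
    simp [Prod.snd_sum]
  have hzl := h n (fun i => (q i).2)
  have hrw : ∑ i, (q i).1 - ω (∑ i, (q i).2) =
      (∑ i, ((q i).1 - ω ((q i).2))) - (ω (∑ i, (q i).2) - ∑ i, ω ((q i).2)) := by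
    rw [Finset.sum_sub_distrib]; abel
  have h1 : ‖∑ i, (q i).1 - ω (∑ i, (q i).2)‖ ≤
      (∑ i, ‖(q i).1 - ω ((q i).2)‖) + C * ∑ i, ‖(q i).2‖ := by
    calc ‖∑ i, (q i).1 - ω (∑ i, (q i).2)‖
        ≤ ‖∑ i, ((q i).1 - ω ((q i).2))‖ + ‖ω (∑ i, (q i).2) - ∑ i, ω ((q i).2)‖ := by
          rw [hrw]; exact norm_sub_le _ _
      _ ≤ (∑ i, ‖(q i).1 - ω ((q i).2)‖) + C * ∑ i, ‖(q i).2‖ :=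
          add_le_add (norm_sum_le _ _) hzl
  have h2 : ‖∑ i, (q i).2‖ ≤ ∑ i, ‖(q i).2‖ := norm_sum_le _ _
  have hA : (∑ i, ‖(q i).1 - ω ((q i).2)‖) ≤ ∑ i, qn ω (q i) :=
    Finset.sum_le_sum fun i _ => le_add_of_nonneg_right (norm_nonneg _)
  have hB : (∑ i, ‖(q i).2‖) ≤ ∑ i, qn ω (q i) :=
    Finset.sum_le_sum fun i _ => le_add_of_nonneg_left (norm_nonneg _)
  have hS : 0 ≤ ∑ i, qn ω (q i) := Finset.sum_nonneg fun i _ => qn_nonneg ω (q i)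
  have hq : qn ω (∑ i, q i) = ‖∑ i, (q i).1 - ω (∑ i, (q i).2)‖ + ‖∑ i, (q i).2‖ := by
    simp [qn, hfst, hsnd]
  rw [hq]
  nlinarith [h1, h2, hA, hB, hS, mul_le_mul_of_nonneg_left hB hC]

/-- The set of sums of quasi-norms over finite decompositions of `p`. -/
def DSet (ω : Z → Y) (p : Y × Z) : Set ℝ :=
  { s | ∃ n, ∃ q : Fin n → Y × Z, (∑ i, q i) = p ∧ s = ∑ i, qn ω (q i) }

/-- The equivalent norm. -/
noncomputable def Nrm (ω : Z → Y) (p : Y × Z) : ℝ := sInf (DSet ω p)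

lemma qn_mem_DSet (ω : Z → Y) (p : Y × Z) : qn ω p ∈ DSet ω p :=
  ⟨1, fun _ => p, by simp, by simp⟩

lemma DSet_nonempty (ω : Z → Y) (p : Y × Z) : (DSet ω p).Nonempty :=
  ⟨qn ω p, qn_mem_DSet ω p⟩

lemma DSet_nonneg (ω : Z → Y) (p : Y × Z) : ∀ s ∈ DSet ω p, (0:ℝ) ≤ s := by
  rintro s ⟨n, q, -, rfl⟩
  exact Finset.sum_nonneg fun i _ => qn_nonneg ω (q i)

lemma DSet_bddBelow (ω : Z → Y) (p : Y × Z) : BddBelow (DSet ω p) :=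
  ⟨0, DSet_nonneg ω p⟩

lemma nrm_nonneg (ω : Z → Y) (p : Y × Z) : 0 ≤ Nrm ω p :=
  le_csInf (DSet_nonempty ω p) (DSet_nonneg ω p)

lemma nrm_le_qn (ω : Z → Y) (p : Y × Z) : Nrm ω p ≤ qn ω p :=
  csInf_le (DSet_bddBelow ω p) (qn_mem_DSet ω p)

lemma qn_le_nrm {ω : Z → Y} {C : ℝ} (hC : 0 ≤ C) (h : ZlinWith ω C) (p : Y × Z) :
    qn ω p ≤ (2 + C) * Nrm ω p := by
  have h2C : (0:ℝ) < 2 + C := by linarith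
  have : qn ω p / (2 + C) ≤ Nrm ω p := by
    apply le_csInf (DSet_nonempty ω p)
    rintro s ⟨n, q, hq, rfl⟩
    rw [div_le_iff₀ h2C]
    have := qn_sum hC h n q
    rw [hq] at this
    linarith [this]
  calc qn ω p = (qn ω p / (2 + C)) * (2 + C) := by field_simp
    _ ≤ Nrm ω p * (2 + C) := by
        exact mul_le_mul_of_nonneg_right this (le_of_lt h2C)
    _ = (2 + C) * Nrm ω p := mul_comm _ _

lemma nrm_add (ω : Z → Y) (p p' : Y × Z) :
    Nrm ω (p + p') ≤ Nrm ω p + Nrm ω p' := by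
  apply le_of_forall_pos_le_add
  intro ε hε
  obtain ⟨a, ha, hal⟩ := exists_lt_of_csInf_lt (DSet_nonempty ω p)
    (lt_add_of_pos_right (Nrm ω p) (half_pos hε))
  obtain ⟨b, hb, hbl⟩ := exists_lt_of_csInf_lt (DSet_nonempty ω p')
    (lt_add_of_pos_right (Nrm ω p') (half_pos hε))
  obtain ⟨n, q, hq, rfl⟩ := ha
  obtain ⟨n', q', hq', rfl⟩ := hb
  have hmem : (∑ i, qn ω (q i)) + (∑ i, qn ω (q' i)) ∈ DSet ω (p + p') := by
    refine ⟨n + n', Fin.append q q', ?_, ?_⟩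
    · rw [Fin.sum_univ_add]
      simp [Fin.append_left, Fin.append_right, hq, hq']
    · rw [Fin.sum_univ_add]
      simp [Fin.append_left, Fin.append_right]
  have := csInf_le (DSet_bddBelow ω (p + p')) hmem
  calc Nrm ω (p + p') ≤ (∑ i, qn ω (q i)) + (∑ i, qn ω (q' i)) := this
    _ ≤ (Nrm ω p + ε / 2) + (Nrm ω p' + ε / 2) := add_le_add hal.le hbl.le
    _ = Nrm ω p + Nrm ω p' + ε := by ring

lemma nrm_zero {ω : Z → Y} (h : IsHomog ω) : Nrm ω 0 = 0 :=
  le_antisymm (le_trans (nrm_le_qn ω 0) (le_of_eq (qn_zero h))) (nrm_nonneg ω 0)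

lemma nrm_smul_le {ω : Z → Y} (h : IsHomog ω) (c : ℝ) (hc : c ≠ 0) (p : Y × Z) :
    Nrm ω (c • p) ≤ |c| * Nrm ω p := by
  have hcp : (0:ℝ) < |c| := abs_pos.2 hc
  have key : Nrm ω (c • p) / |c| ≤ Nrm ω p := by
    apply le_csInf (DSet_nonempty ω p)
    rintro s ⟨n, q, hq, rfl⟩
    rw [div_le_iff₀ hcp]
    have hmem : (∑ i, qn ω (q i)) * |c| ∈ DSet ω (c • p) := by
      refine ⟨n, fun i => c • q i, ?_, ?_⟩
      · rw [← Finset.smul_sum, hq]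
      · rw [Finset.sum_congr rfl fun i _ => qn_smul h c (q i), ← Finset.mul_sum,
          mul_comm]
    exact csInf_le (DSet_bddBelow ω (c • p)) hmem
  calc Nrm ω (c • p) = (Nrm ω (c • p) / |c|) * |c| := by field_simp
    _ ≤ Nrm ω p * |c| := mul_le_mul_of_nonneg_right key hcp.le
    _ = |c| * Nrm ω p := mul_comm _ _

lemma nrm_smul {ω : Z → Y} (h : IsHomog ω) (c : ℝ) (p : Y × Z) :
    Nrm ω (c • p) = |c| * Nrm ω p := by
  rcases eq_or_ne c 0 with rfl | hc
  · simp [nrm_zero h]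
  · refine le_antisymm (nrm_smul_le h c hc p) ?_
    have h2 := nrm_smul_le h c⁻¹ (inv_ne_zero hc) (c • p)
    rw [inv_smul_smul₀ hc] at h2
    have hcp : (0:ℝ) < |c| := abs_pos.2 hc
    rw [abs_inv] at h2
    calc |c| * Nrm ω p ≤ |c| * (|c|⁻¹ * Nrm ω (c • p)) :=
          mul_le_mul_of_nonneg_left h2 hcp.le
      _ = Nrm ω (c • p) := by field_simp

end Statement1Aux

open Statement1Aux

/-- The quasi-norm `‖(y,z)‖_ω = ‖y − ωz‖ + ‖z‖` of a z-linear map `ω` is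
equivalent to a norm making `Y ⊕_ω Z` a Banach space, and `j y = (y,0)`,
`p (y,z) = z` realize an exact sequence `0 → Y → Y ⊕_ω Z → Z → 0`. -/
theorem statement1 {Y Z : Type*}
    [NormedAddCommGroup Y] [NormedSpace ℝ Y] [CompleteSpace Y]
    [NormedAddCommGroup Z] [NormedSpace ℝ Z] [CompleteSpace Z]
    (ω : Z → Y) (hω : IsZlin ω) :
    ∃ N : Y × Z → ℝ,
      -- N is a norm
      (∀ p, 0 ≤ N p) ∧ (∀ p, N p = 0 → p = 0) ∧
      (∀ p p', N (p + p') ≤ N p + N p') ∧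
      (∀ (c : ℝ) (p : Y × Z), N (c • p) = |c| * N p) ∧
      -- N is equivalent to the quasi-norm
      (∃ c₁ > (0:ℝ), ∃ c₂ > (0:ℝ), ∀ p : Y × Z,
        c₁ * (‖p.1 - ω p.2‖ + ‖p.2‖) ≤ N p ∧
        N p ≤ c₂ * (‖p.1 - ω p.2‖ + ‖p.2‖)) ∧
      -- the space is complete for N
      (∀ f : ℕ → Y × Z,
        (∀ ε > (0:ℝ), ∃ k, ∀ m ≥ k, ∀ n ≥ k, N (f m - f n) < ε) →
        ∃ p, ∀ ε > (0:ℝ), ∃ k, ∀ n ≥ k, N (f n - p) < ε) ∧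
      -- j and p realize an exact sequence of Banach spaces
      Function.Injective (fun y : Y => ((y, 0) : Y × Z)) ∧
      (∀ p : Y × Z, p.2 = 0 ↔ ∃ y : Y, p = (y, 0)) ∧
      Function.Surjective (fun p : Y × Z => p.2) ∧
      (∃ M : ℝ, ∀ y : Y, N (y, 0) ≤ M * ‖y‖) ∧
      (∃ M : ℝ, ∀ p : Y × Z, ‖p.2‖ ≤ M * N p) := by
  classical
  obtain ⟨hhom, C, hC, hzl⟩ := hω
  have hC0 : (0:ℝ) ≤ C := hC.le
  have h2C : (0:ℝ) < 2 + C := by linarith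
  refine ⟨Nrm ω, nrm_nonneg ω, ?_, nrm_add ω, nrm_smul hhom, ?_, ?_, ?_, ?_, ?_, ?_, ?_⟩
  · -- N p = 0 → p = 0
    intro p hp
    have hq : qn ω p ≤ 0 := by
      have := qn_le_nrm hC0 hzl p
      rw [hp] at this; linarith
    have h2 : p.2 = 0 := by
      have hle : ‖p.2‖ ≤ 0 := by
        have := norm_nonneg (p.1 - ω p.2)
        simp only [qn] at hq; linarith
      simpa using le_antisymm hle (norm_nonneg _)
    have h1 : p.1 = 0 := by
      have hle : ‖p.1 - ω p.2‖ ≤ 0 := by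
        have := norm_nonneg p.2
        simp only [qn] at hq; linarith
      have h0 : p.1 - ω p.2 = 0 := by
        simpa using le_antisymm hle (norm_nonneg _)
      rw [h2, homog_zero hhom, sub_zero] at h0
      exact h0
    rw [Prod.ext_iff]
    exact ⟨h1, h2⟩
  · -- equivalence to quasi-norm
    refine ⟨1 / (2 + C), by positivity, 1, one_pos, fun p => ?_⟩
    have h1 := qn_le_nrm hC0 hzl p
    have h2 := nrm_le_qn ω p
    constructor
    · rw [div_mul_eq_mul_div, one_mul, div_le_iff₀ h2C]
      show qn ω p ≤ Nrm ω p * (2 + C)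
      linarith [h1]
    · rw [one_mul]; exact h2
  · -- completeness
    intro f hf
    have hq : ∀ ε > (0:ℝ), ∃ k, ∀ m ≥ k, ∀ n ≥ k, qn ω (f m - f n) < ε := by
      intro ε hε
      obtain ⟨k, hk⟩ := hf (ε / (2 + C)) (by positivity)
      refine ⟨k, fun m hm n hn => ?_⟩
      have h1 := qn_le_nrm hC0 hzl (f m - f n)
      have h2 := hk m hm n hn
      calc qn ω (f m - f n) ≤ (2 + C) * Nrm ω (f m - f n) := h1
        _ < (2 + C) * (ε / (2 + C)) := by
            exact mul_lt_mul_of_pos_left h2 h2C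
        _ = ε := by field_simp
    -- the second coordinates form a Cauchy sequence
    have hsub1 : ∀ m n : ℕ, (f m - f n).1 = (f m).1 - (f n).1 := fun m n => rfl
    have hsub2 : ∀ m n : ℕ, (f m - f n).2 = (f m).2 - (f n).2 := fun m n => rfl
    have hz2 : ∀ m n : ℕ, ‖(f m).2 - (f n).2‖ ≤ qn ω (f m - f n) := by
      intro m n
      have : qn ω (f m - f n) = ‖(f m - f n).1 - ω ((f m - f n).2)‖ + ‖(f m - f n).2‖ := rfl
      rw [this, hsub2]
      exact le_add_of_nonneg_left (norm_nonneg _)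
    have hy2 : ∀ m n : ℕ, ‖((f m).1 - (f n).1) - ω ((f m).2 - (f n).2)‖ ≤ qn ω (f m - f n) := by
      intro m n
      have : qn ω (f m - f n) = ‖(f m - f n).1 - ω ((f m - f n).2)‖ + ‖(f m - f n).2‖ := rfl
      rw [this, hsub1, hsub2]
      exact le_add_of_nonneg_right (norm_nonneg _)
    have hcz : CauchySeq (fun n => (f n).2) := by
      rw [Metric.cauchySeq_iff]
      intro ε hε
      obtain ⟨k, hk⟩ := hq ε hε
      exact ⟨k, fun m hm n hn => by
        rw [dist_eq_norm]
        exact lt_of_le_of_lt (hz2 m n) (hk m hm n hn)⟩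
    obtain ⟨zlim, hzlim⟩ := cauchySeq_tendsto_of_complete hcz
    have hrε : ∀ ε > (0:ℝ), ∃ k, ∀ n ≥ k, ‖(f n).2 - zlim‖ < ε := by
      intro ε hε
      obtain ⟨k, hk⟩ := (Metric.tendsto_atTop.1 hzlim) ε hε
      exact ⟨k, fun n hn => by rw [← dist_eq_norm]; exact hk n hn⟩
    -- the auxiliary sequence w
    set w : ℕ → Y := fun n => (f n).1 - ω ((f n).2 - zlim) with hw
    have key : ∀ m n : ℕ, ‖w m - w n‖ ≤
        qn ω (f m - f n) + C * (‖(f m).2 - (f n).2‖ + ‖(f n).2 - zlim‖) := by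
      intro m n
      have h2 := zlin2 hzl ((f m).2 - (f n).2) ((f n).2 - zlim)
      have e : ((f m).2 - (f n).2) + ((f n).2 - zlim) = (f m).2 - zlim := by abel
      rw [e] at h2
      have e2 : w m - w n = (((f m).1 - (f n).1) - ω ((f m).2 - (f n).2)) -
          (ω ((f m).2 - zlim) - ω ((f m).2 - (f n).2) - ω ((f n).2 - zlim)) := by
        simp only [hw]; abel
      calc ‖w m - w n‖ ≤ ‖((f m).1 - (f n).1) - ω ((f m).2 - (f n).2)‖ +
            ‖ω ((f m).2 - zlim) - ω ((f m).2 - (f n).2) - ω ((f n).2 - zlim)‖ := by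
            rw [e2]; exact norm_sub_le _ _
        _ ≤ qn ω (f m - f n) + C * (‖(f m).2 - (f n).2‖ + ‖(f n).2 - zlim‖) :=
            add_le_add (hy2 m n) h2
    have hcw : CauchySeq w := by
      rw [Metric.cauchySeq_iff]
      intro ε hε
      have hε' : (0:ℝ) < ε / (2 * C + 2) := by positivity
      obtain ⟨k₁, hk₁⟩ := hq (ε / (2 * C + 2)) hε'
      obtain ⟨k₂, hk₂⟩ := hrε (ε / (2 * C + 2)) hε'
      refine ⟨max k₁ k₂, fun m hm n hn => ?_⟩
      have hm1 : m ≥ k₁ := le_trans (le_max_left _ _) hm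
      have hn1 : n ≥ k₁ := le_trans (le_max_left _ _) hn
      have hn2 : n ≥ k₂ := le_trans (le_max_right _ _) hn
      have b1 := hk₁ m hm1 n hn1
      have b2 := hk₂ n hn2
      have b3 : ‖(f m).2 - (f n).2‖ < ε / (2 * C + 2) :=
        lt_of_le_of_lt (hz2 m n) b1
      rw [dist_eq_norm]
      calc ‖w m - w n‖ ≤ qn ω (f m - f n) +
            C * (‖(f m).2 - (f n).2‖ + ‖(f n).2 - zlim‖) := key m n
        _ < ε / (2 * C + 2) + C * (ε / (2 * C + 2) + ε / (2 * C + 2)) := by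
            have : C * (‖(f m).2 - (f n).2‖ + ‖(f n).2 - zlim‖) ≤
                C * (ε / (2 * C + 2) + ε / (2 * C + 2)) :=
              mul_le_mul_of_nonneg_left (by linarith) hC0
            linarith
        _ ≤ ε := by
            rw [← add_div, ← two_mul]
            have h22 : (0:ℝ) < 2 * C + 2 := by linarith
            have e : ε / (2 * C + 2) + C * (2 * ε / (2 * C + 2)) =
                ε * ((2 * C + 1) / (2 * C + 2)) := by
              field_simp; ring
            rw [e]
            have hle : (2 * C + 1) / (2 * C + 2) ≤ 1 := by
              rw [div_le_one h22]; linarith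
            calc ε * ((2 * C + 1) / (2 * C + 2)) ≤ ε * 1 :=
                  mul_le_mul_of_nonneg_left hle hε.le
              _ = ε := mul_one ε
    obtain ⟨ylim, hylim⟩ := cauchySeq_tendsto_of_complete hcw
    have hwε : ∀ ε > (0:ℝ), ∃ k, ∀ n ≥ k, ‖w n - ylim‖ < ε := by
      intro ε hε
      obtain ⟨k, hk⟩ := (Metric.tendsto_atTop.1 hylim) ε hε
      exact ⟨k, fun n hn => by rw [← dist_eq_norm]; exact hk n hn⟩
    refine ⟨(ylim, zlim), fun ε hε => ?_⟩
    obtain ⟨k₁, hk₁⟩ := hwε (ε / 2) (by positivity)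
    obtain ⟨k₂, hk₂⟩ := hrε (ε / 2) (by positivity)
    refine ⟨max k₁ k₂, fun n hn => ?_⟩
    have hn1 : n ≥ k₁ := le_trans (le_max_left _ _) hn
    have hn2 : n ≥ k₂ := le_trans (le_max_right _ _) hn
    have hqn : qn ω (f n - (ylim, zlim)) = ‖w n - ylim‖ + ‖(f n).2 - zlim‖ := by
      have e1 : (f n - (ylim, zlim)).1 = (f n).1 - ylim := rfl
      have e2 : (f n - (ylim, zlim)).2 = (f n).2 - zlim := rfl
      have e3 : (f n).1 - ylim - ω ((f n).2 - zlim) = w n - ylim := by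
        simp only [hw]; abel
      simp only [qn, e1, e2, e3]
    calc Nrm ω (f n - (ylim, zlim)) ≤ qn ω (f n - (ylim, zlim)) := nrm_le_qn ω _
      _ = ‖w n - ylim‖ + ‖(f n).2 - zlim‖ := hqn
      _ < ε / 2 + ε / 2 := add_lt_add (hk₁ n hn1) (hk₂ n hn2)
      _ = ε := by ring
  · -- j injective
    intro a b hab
    simpa using congrArg Prod.fst hab
  · -- kernel characterization
    intro p
    constructor
    · intro h
      exact ⟨p.1, by ext <;> simp [h]⟩
    · rintro ⟨y, rfl⟩; rfl
  · -- p surjective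
    intro z
    exact ⟨(0, z), rfl⟩
  · -- j bounded
    refine ⟨1, fun y => ?_⟩
    have := nrm_le_qn ω ((y, 0) : Y × Z)
    have hq : qn ω ((y, 0) : Y × Z) = ‖y‖ := by
      simp [qn, homog_zero hhom]
    rw [hq] at this
    linarith
  · -- p bounded
    refine ⟨2 + C, fun p => ?_⟩
    have h1 := qn_le_nrm hC0 hzl p
    have h2 : ‖p.2‖ ≤ qn ω p := le_add_of_nonneg_left (norm_nonneg _)
    linarith


end
end

section
/- Let Ω : X → Y be a z-linear map, F a finite-dimensional subspace of X, x₁,…,xₙ points in the unit sphere of F with xᵢ ≠ ±xⱼ for i ≠ j, and ε > 0. Then there exists a z-linear map Ω_F : X → Y such that: (1) Ω_F xᵢ = Ω xᵢ for all i; (2) ‖Ω_F − Ω‖ ≤ (1+ε)Z(Ω); (3) Z(Ω_F) ≤ (3+ε)Z(Ω); (4) the image Ω_F(F) spans a finite-dimensional subspace of Y. -/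
open scoped BigOperators

noncomputable section

open scoped Classical

/-- ray selection machinery -/
def rayPick {X : Type*} [AddCommGroup X] [Module ℝ X] (p : X) : X :=
  if h : ({q : X | ∃ c : ℝ, c ≠ 0 ∧ q = c • p} : Set X).Nonempty then h.some else 0

lemma rayPick_mem {X : Type*} [AddCommGroup X] [Module ℝ X] (p : X) :
    ∃ c : ℝ, c ≠ 0 ∧ rayPick p = c • p := by
  have h : ({q : X | ∃ c : ℝ, c ≠ 0 ∧ q = c • p} : Set X).Nonempty :=
    ⟨p, 1, one_ne_zero, (one_smul ℝ p).symm⟩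
  rw [rayPick, dif_pos h]
  exact h.some_mem

lemma rayPick_smul {X : Type*} [AddCommGroup X] [Module ℝ X] {c : ℝ} (hc : c ≠ 0) (p : X) :
    rayPick (c • p) = rayPick p := by
  have hset : ({q : X | ∃ d : ℝ, d ≠ 0 ∧ q = d • c • p} : Set X)
      = {q : X | ∃ d : ℝ, d ≠ 0 ∧ q = d • p} := by
    ext q
    constructor
    · rintro ⟨d, hd, rfl⟩
      exact ⟨d * c, mul_ne_zero hd hc, (mul_smul d c p).symm⟩
    · rintro ⟨d, hd, rfl⟩
      refine ⟨d * c⁻¹, mul_ne_zero hd (inv_ne_zero hc), ?_⟩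
      rw [smul_smul, mul_assoc, inv_mul_cancel₀ hc, mul_one]
  rw [rayPick, rayPick, hset]

lemma rayPick_ne_zero {X : Type*} [AddCommGroup X] [Module ℝ X] [NoZeroSMulDivisors ℝ X]
    {p : X} (hp : p ≠ 0) : rayPick p ≠ 0 := by
  obtain ⟨c, hc, h⟩ := rayPick_mem p
  rw [h]
  exact smul_ne_zero hc hp

def rayCoef {X : Type*} [AddCommGroup X] [Module ℝ X] (p : X) : ℝ :=
  if h : ∃ c : ℝ, c ≠ 0 ∧ p = c • rayPick p then h.choose else 0

lemma rayCoef_spec {X : Type*} [AddCommGroup X] [Module ℝ X] [NoZeroSMulDivisors ℝ X]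
    {p : X} (hp : p ≠ 0) : rayCoef p ≠ 0 ∧ p = rayCoef p • rayPick p := by
  obtain ⟨c, hc, h⟩ := rayPick_mem p
  have hex : ∃ c : ℝ, c ≠ 0 ∧ p = c • rayPick p := by
    refine ⟨c⁻¹, inv_ne_zero hc, ?_⟩
    rw [h, smul_smul, inv_mul_cancel₀ hc, one_smul]
  rw [rayCoef, dif_pos hex]
  exact hex.choose_spec

lemma rayCoef_smul {X : Type*} [AddCommGroup X] [Module ℝ X] [NoZeroSMulDivisors ℝ X]
    {c : ℝ} (hc : c ≠ 0) {p : X} (hp : p ≠ 0) : rayCoef (c • p) = c * rayCoef p := by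
  have hcp : c • p ≠ 0 := smul_ne_zero hc hp
  have h1 := rayCoef_spec hcp
  have h2 := rayCoef_spec hp
  have hrp : rayPick (c • p) = rayPick p := rayPick_smul hc p
  apply smul_left_injective ℝ (rayPick_ne_zero hp)
  show rayCoef (c • p) • rayPick p = (c * rayCoef p) • rayPick p
  rw [← hrp, ← h1.2, hrp, mul_smul, ← h2.2]

/-- homogeneous approximate selection into a submodule -/
lemma homog_selection {X Y : Type*} [NormedAddCommGroup X] [NormedSpace ℝ X]
    [NormedAddCommGroup Y] [NormedSpace ℝ Y]
    (Ω : X → Y) (hΩ : IsHomog Ω) (W : Submodule ℝ Y) (M : ℝ)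
    (S : Set X) (hS0 : (0 : X) ∉ S) (hSc : ∀ c : ℝ, c ≠ 0 → ∀ p ∈ S, c • p ∈ S)
    (hsel : ∀ p ∈ S, ∃ w ∈ W, ‖Ω p - w‖ ≤ M * ‖p‖) :
    ∃ Ψ : X → Y, IsHomog Ψ ∧ ∀ p ∈ S, Ψ p ∈ W ∧ ‖Ω p - Ψ p‖ ≤ M * ‖p‖ := by
  classical
  set sel : X → Y := fun q => if h : ∃ w ∈ W, ‖Ω q - w‖ ≤ M * ‖q‖ then h.choose else 0 with hseldef
  set Ψ : X → Y := fun p => if p = 0 then 0 else rayCoef p • sel (rayPick p) with hΨdef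
  have hΨ0 : Ψ 0 = 0 := by simp [hΨdef]
  refine ⟨Ψ, ?_, ?_⟩
  · intro c p
    by_cases hc : c = 0
    · subst hc; simp [hΨ0]
    by_cases hp : p = 0
    · subst hp; simp [hΨ0]
    have hcp : c • p ≠ 0 := smul_ne_zero hc hp
    show Ψ (c • p) = c • Ψ p
    rw [hΨdef]
    simp only [if_neg hcp, if_neg hp]
    rw [rayPick_smul hc, rayCoef_smul hc hp, mul_smul]
  · intro p hp
    have hp0 : p ≠ 0 := fun h => hS0 (h ▸ hp)
    obtain ⟨c₀, hc₀, hrp⟩ := rayPick_mem p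
    have hrpS : rayPick p ∈ S := by rw [hrp]; exact hSc c₀ hc₀ p hp
    have hex : ∃ w ∈ W, ‖Ω (rayPick p) - w‖ ≤ M * ‖rayPick p‖ := hsel _ hrpS
    have hselval : sel (rayPick p) ∈ W ∧ ‖Ω (rayPick p) - sel (rayPick p)‖ ≤ M * ‖rayPick p‖ := by
      rw [hseldef]
      simp only [dif_pos hex]
      obtain ⟨hw, hb⟩ := hex.choose_spec
      exact ⟨hw, hb⟩
    obtain ⟨hcoef, hpeq⟩ := rayCoef_spec (X := X) hp0
    have hΨp : Ψ p = rayCoef p • sel (rayPick p) := by rw [hΨdef]; simp [if_neg hp0]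
    constructor
    · rw [hΨp]; exact W.smul_mem _ hselval.1
    · rw [hΨp]
      calc ‖Ω p - rayCoef p • sel (rayPick p)‖
          = ‖rayCoef p • (Ω (rayPick p) - sel (rayPick p))‖ := by
            rw [smul_sub]
            congr 2
            conv_lhs => rw [hpeq]
            exact hΩ _ _
        _ = |rayCoef p| * ‖Ω (rayPick p) - sel (rayPick p)‖ := by
            rw [norm_smul, Real.norm_eq_abs]
        _ ≤ |rayCoef p| * (M * ‖rayPick p‖) :=
            mul_le_mul_of_nonneg_left hselval.2 (abs_nonneg _)
        _ = M * ‖rayCoef p • rayPick p‖ := by rw [norm_smul, Real.norm_eq_abs]; ring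
        _ = M * ‖p‖ := by rw [← hpeq]

set_option maxHeartbeats 2000000 in
/-- A z-linear map can be modified on a finite-dimensional subspace so as to
have finite-dimensional range there, keeping control of the constants. -/
theorem statement3 {X Y : Type*}
    [NormedAddCommGroup X] [NormedSpace ℝ X] [CompleteSpace X]
    [NormedAddCommGroup Y] [NormedSpace ℝ Y] [CompleteSpace Y]
    (Ω : X → Y) (hΩ : IsZlin Ω)
    (F : Submodule ℝ X) (hF : FiniteDimensional ℝ F)
    (n : ℕ) (x : Fin n → X) (hxF : ∀ k, x k ∈ F) (hxs : ∀ k, ‖x k‖ = 1)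
    (hdist : ∀ k j, k ≠ j → x k ≠ x j ∧ x k ≠ -x j)
    (ε : ℝ) (hε : 0 < ε) :
    ∃ ΩF : X → Y, IsZlin ΩF ∧
      (∀ k, ΩF (x k) = Ω (x k)) ∧
      (∀ p, ‖ΩF p - Ω p‖ ≤ (1 + ε) * zconst Ω * ‖p‖) ∧
      zconst ΩF ≤ (3 + ε) * zconst Ω ∧
      FiniteDimensional ℝ (Submodule.span ℝ (ΩF '' (F : Set X))) := by
  classical
  haveI := hF
  obtain ⟨hhom, C₀, hC₀, hzl₀⟩ := hΩ
  have hΩ0 : Ω 0 = 0 := by simpa using hhom 0 0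
  have hSne : {C : ℝ | 0 ≤ C ∧ ZlinWith Ω C}.Nonempty := ⟨C₀, le_of_lt hC₀, hzl₀⟩
  have hSbdd : BddBelow {C : ℝ | 0 ≤ C ∧ ZlinWith Ω C} := ⟨0, fun c hc => hc.1⟩
  have hZnn : 0 ≤ zconst Ω := le_csInf hSne fun c hc => hc.1
  rcases eq_or_lt_of_le hZnn with hZ0 | hZpos
  · -- case zconst Ω = 0 : Ω is linear, take ΩF = Ω
    have hzl0 : ZlinWith Ω 0 := by
      intro m xs
      have hTnn : 0 ≤ ∑ j, ‖xs j‖ := Finset.sum_nonneg fun j _ => norm_nonneg _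
      set N := ‖Ω (∑ j, xs j) - ∑ j, Ω (xs j)‖ with hN
      set T := ∑ j, ‖xs j‖ with hT
      have key : ∀ θ : ℝ, 0 < θ → N ≤ θ * T := by
        intro θ hθ
        have hlt : sInf {C : ℝ | 0 ≤ C ∧ ZlinWith Ω C} < θ := by
          have : zconst Ω < θ := by rw [← hZ0]; exact hθ
          exact this
        obtain ⟨C, hCmem, hClt⟩ := exists_lt_of_csInf_lt hSne hlt
        calc N ≤ C * T := hCmem.2 m xs
          _ ≤ θ * T := mul_le_mul_of_nonneg_right (le_of_lt hClt) hTnn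
      show N ≤ 0 * T
      rw [zero_mul]
      by_contra hcon
      push_neg at hcon
      have h1 := key (N / (2 * (T + 1))) (by positivity)
      have h2 : N / (2 * (T + 1)) * T < N := by
        rw [div_mul_eq_mul_div, div_lt_iff₀ (by positivity)]
        nlinarith
      linarith
    have hadd : ∀ a b : X, Ω (a + b) = Ω a + Ω b := by
      intro a b
      have h := hzl0 2 ![a, b]
      simp only [Fin.sum_univ_two, Matrix.cons_val_zero, Matrix.cons_val_one, Matrix.head_cons,
        zero_mul] at h
      have h2 : Ω (a + b) - (Ω a + Ω b) = 0 := norm_le_zero_iff.mp h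
      exact sub_eq_zero.mp h2
    set Lm : X →ₗ[ℝ] Y :=
      { toFun := Ω, map_add' := hadd, map_smul' := fun c x => hhom c x } with hLm
    refine ⟨Ω, ⟨hhom, C₀, hC₀, hzl₀⟩, fun k => rfl, ?_, ?_, ?_⟩
    · intro p
      rw [← hZ0]
      simp
    · rw [← hZ0]
      simp
    · have hle : Submodule.span ℝ (Ω '' (F : Set X)) ≤ Submodule.map Lm F := by
        rw [Submodule.span_le]
        rintro _ ⟨p, hp, rfl⟩
        exact ⟨p, hp, rfl⟩
      haveI : FiniteDimensional ℝ (Submodule.map Lm F) := by infer_instance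
      exact Submodule.finiteDimensional_of_le hle
  · -- main case : zconst Ω > 0
    set δ : ℝ := min ε 1 / 9 with hδdef
    have hmin : 0 < min ε 1 := lt_min hε one_pos
    have hδpos : 0 < δ := by rw [hδdef]; linarith
    have hδle : 9 * δ ≤ ε := by
      have := min_le_left ε 1
      rw [hδdef]; linarith
    have hδ1 : δ ≤ 1 / 9 := by
      have := min_le_right ε 1
      rw [hδdef]; linarith
    have hlt : sInf {C : ℝ | 0 ≤ C ∧ ZlinWith Ω C} < (1 + δ) * zconst Ω := by
      show zconst Ω < (1 + δ) * zconst Ω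
      nlinarith
    obtain ⟨C, hCmem, hClt⟩ := exists_lt_of_csInf_lt hSne hlt
    obtain ⟨hC0, hzl⟩ := hCmem
    have hCge : zconst Ω ≤ C := csInf_le hSbdd ⟨hC0, hzl⟩
    have hCpos : 0 < C := lt_of_lt_of_le hZpos hCge
    -- boundedness of Ω on F
    set b := Module.finBasis ℝ F with hb
    set ℓ : Fin (Module.finrank ℝ F) → (F →L[ℝ] ℝ) :=
      fun i => LinearMap.toContinuousLinearMap (b.coord i) with hℓ
    set K : ℝ := ∑ i, ‖ℓ i‖ * (‖Ω ((b i : F) : X)‖ + C * ‖((b i : F) : X)‖) with hKdef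
    have hKnn : 0 ≤ K := Finset.sum_nonneg fun i _ => by positivity
    have hK : ∀ y : F, ‖Ω (y : X)‖ ≤ K * ‖y‖ := by
      intro y
      have hy : (y : X) = ∑ i, b.repr y i • ((b i : F) : X) := by
        conv_lhs => rw [← b.sum_repr y]
        push_cast
        rfl
      have h2 := hzl _ (fun i => b.repr y i • ((b i : F) : X))
      rw [← hy] at h2
      have h3 : ∀ i ∈ Finset.univ, Ω (b.repr y i • ((b i : F) : X))
          = b.repr y i • Ω ((b i : F) : X) := fun i _ => hhom _ _
      rw [Finset.sum_congr rfl h3] at h2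
      have h5 : ∀ i, |b.repr y i| ≤ ‖ℓ i‖ * ‖y‖ := by
        intro i
        have := (ℓ i).le_opNorm y
        simpa [hℓ, Real.norm_eq_abs] using this
      have htri : ‖Ω (y : X)‖ ≤ ‖Ω (y : X) - ∑ i, b.repr y i • Ω ((b i : F) : X)‖
          + ‖∑ i, b.repr y i • Ω ((b i : F) : X)‖ := by
        have := norm_add_le (Ω (y : X) - ∑ i, b.repr y i • Ω ((b i : F) : X))
          (∑ i, b.repr y i • Ω ((b i : F) : X))
        simpa using this
      have hsum2 : ‖∑ i, b.repr y i • Ω ((b i : F) : X)‖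
          ≤ ∑ i, |b.repr y i| * ‖Ω ((b i : F) : X)‖ := by
        refine (norm_sum_le _ _).trans ?_
        refine Finset.sum_le_sum fun i _ => ?_
        rw [norm_smul, Real.norm_eq_abs]
      have hsum3 : C * ∑ i, ‖b.repr y i • ((b i : F) : X)‖
          = ∑ i, C * (|b.repr y i| * ‖((b i : F) : X)‖) := by
        rw [Finset.mul_sum]
        refine Finset.sum_congr rfl fun i _ => ?_
        rw [norm_smul, Real.norm_eq_abs]
      calc ‖Ω (y : X)‖
          ≤ ‖Ω (y : X) - ∑ i, b.repr y i • Ω ((b i : F) : X)‖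
            + ‖∑ i, b.repr y i • Ω ((b i : F) : X)‖ := htri
        _ ≤ C * ∑ i, ‖b.repr y i • ((b i : F) : X)‖
            + ∑ i, |b.repr y i| * ‖Ω ((b i : F) : X)‖ := add_le_add h2 hsum2
        _ = ∑ i, |b.repr y i| * (‖Ω ((b i : F) : X)‖ + C * ‖((b i : F) : X)‖) := by
            rw [hsum3, ← Finset.sum_add_distrib]
            refine Finset.sum_congr rfl fun i _ => ?_
            ring
        _ ≤ ∑ i, (‖ℓ i‖ * ‖y‖) * (‖Ω ((b i : F) : X)‖ + C * ‖((b i : F) : X)‖) := by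
            refine Finset.sum_le_sum fun i _ => ?_
            exact mul_le_mul_of_nonneg_right (h5 i) (by positivity)
        _ = K * ‖y‖ := by
            rw [hKdef, Finset.sum_mul]
            refine Finset.sum_congr rfl fun i _ => ?_
            ring
    -- the η-net
    set η : ℝ := δ * C / (K + 2 * C + 1) with hηdef
    have hden : (0 : ℝ) < K + 2 * C + 1 := by linarith
    have hηpos : 0 < η := by
      rw [hηdef]
      exact div_pos (by positivity) hden
    have hηbound : (2 * C + K) * η ≤ δ * C := by
      rw [hηdef, mul_div_assoc']
      rw [div_le_iff₀ hden]
      nlinarith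
    haveI : ProperSpace F := FiniteDimensional.proper ℝ F
    have hcpt : IsCompact (Metric.sphere (0 : F) 1) := isCompact_sphere 0 1
    obtain ⟨t, htfin, htcov⟩ := Metric.totallyBounded_iff.mp hcpt.totallyBounded η hηpos
    set W : Submodule ℝ Y := Submodule.span ℝ ((fun u : F => Ω (u : X)) '' t) with hWdef
    haveI hWfd : FiniteDimensional ℝ W := FiniteDimensional.span_of_finite ℝ (htfin.image _)
    -- approximate selection into W
    have hsel : ∀ p ∈ (F : Set X), ∃ w ∈ W, ‖Ω p - w‖ ≤ (1 + δ) * C * ‖p‖ := by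
      intro p hp
      lift p to F using hp
      by_cases hp0 : p = 0
      · subst hp0
        refine ⟨0, W.zero_mem, ?_⟩
        push_cast
        simp [hΩ0]
      have hnp : ‖p‖ ≠ 0 := by simpa using hp0
      have hnpn : (0 : ℝ) < ‖p‖ := lt_of_le_of_ne (norm_nonneg p) (Ne.symm hnp)
      set v : F := ‖p‖⁻¹ • p with hvdef
      have hv1 : ‖v‖ = 1 := by
        rw [hvdef, norm_smul, norm_inv, norm_norm, inv_mul_cancel₀ hnp]
      have hvs : v ∈ Metric.sphere (0 : F) 1 := by
        simpa [mem_sphere_iff_norm] using hv1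
      obtain ⟨u, hut, hvu⟩ := Set.mem_iUnion₂.mp (htcov hvs)
      have hdistvu : ‖v - u‖ < η := by
        rw [← dist_eq_norm]
        exact Metric.mem_ball.mp hvu
      have hun : ‖u‖ ≤ 1 + η := by
        have h1 : ‖u‖ - ‖v‖ ≤ ‖u - v‖ := norm_sub_norm_le u v
        have h2 : ‖u - v‖ = ‖v - u‖ := norm_sub_rev u v
        rw [hv1] at h1
        linarith
      have hpair := hzl 2 ![(u : X), (v : X) - (u : X)]
      simp only [Fin.sum_univ_two, Matrix.cons_val_zero, Matrix.cons_val_one,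
        Matrix.head_cons] at hpair
      rw [add_sub_cancel] at hpair
      have h6 : ‖Ω ((v : X) - (u : X))‖ ≤ K * ‖v - u‖ := by
        have := hK (v - u)
        simpa using this
      have hnvu : ‖(v : X) - (u : X)‖ = ‖v - u‖ := by
        rw [← Submodule.coe_sub]
        rfl
      have hnu : ‖(u : X)‖ = ‖u‖ := rfl
      have hΩvu : ‖Ω (v : X) - Ω (u : X)‖ ≤ (1 + δ) * C := by
        have htri2 : ‖Ω (v : X) - Ω (u : X)‖
            ≤ ‖Ω (v : X) - (Ω (u : X) + Ω ((v : X) - (u : X)))‖ + ‖Ω ((v : X) - (u : X))‖ := by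
          have := norm_add_le (Ω (v : X) - (Ω (u : X) + Ω ((v : X) - (u : X))))
            (Ω ((v : X) - (u : X)))
          calc ‖Ω (v : X) - Ω (u : X)‖
              = ‖Ω (v : X) - (Ω (u : X) + Ω ((v : X) - (u : X))) + Ω ((v : X) - (u : X))‖ := by
                congr 1; abel
            _ ≤ _ := this
        rw [hnvu, hnu] at hpair
        have hKvu : K * ‖v - u‖ ≤ K * η := mul_le_mul_of_nonneg_left (le_of_lt hdistvu) hKnn
        have hCb : C * (‖u‖ + ‖v - u‖) ≤ C * (1 + η + η) := by
          apply mul_le_mul_of_nonneg_left _ hC0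
          linarith
        nlinarith [htri2, hpair, h6, hKvu, hCb, hηbound, mul_le_mul_of_nonneg_left
          (le_of_lt hdistvu) hKnn]
      refine ⟨‖p‖ • Ω (u : X), W.smul_mem _ (Submodule.subset_span ⟨u, hut, rfl⟩), ?_⟩
      have hpv : (p : X) = ‖p‖ • (v : X) := by
        rw [hvdef]
        push_cast
        rw [smul_smul, mul_inv_cancel₀ hnp, one_smul]
      have hnorm_p : ‖(p : X)‖ = ‖p‖ := rfl
      calc ‖Ω (p : X) - ‖p‖ • Ω (u : X)‖
          = ‖(‖p‖ : ℝ) • (Ω (v : X) - Ω (u : X))‖ := by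
            rw [smul_sub]
            congr 2
            conv_lhs => rw [hpv]
            exact hhom _ _
        _ = ‖p‖ * ‖Ω (v : X) - Ω (u : X)‖ := by
            rw [norm_smul, Real.norm_eq_abs, abs_of_nonneg (norm_nonneg p)]
        _ ≤ ‖p‖ * ((1 + δ) * C) := mul_le_mul_of_nonneg_left hΩvu (norm_nonneg p)
        _ = (1 + δ) * C * ‖(p : X)‖ := by rw [hnorm_p]; ring
    -- the exceptional set
    set U : Set X := {p : X | p ∈ (F : Set X) ∧ p ≠ 0 ∧ ∀ (k : Fin n) (c : ℝ), p ≠ c • x k}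
      with hUdef
    have hU0 : (0 : X) ∉ U := fun h => h.2.1 rfl
    have hUsmul : ∀ c : ℝ, c ≠ 0 → ∀ p ∈ U, c • p ∈ U := by
      intro c hc p hp
      obtain ⟨hp1, hp2, hp3⟩ := hp
      refine ⟨F.smul_mem c hp1, smul_ne_zero hc hp2, ?_⟩
      intro k d hcp
      apply hp3 k (c⁻¹ * d)
      rw [mul_smul, ← hcp, smul_smul, inv_mul_cancel₀ hc, one_smul]
    obtain ⟨Ψ, hΨhom, hΨ⟩ := homog_selection Ω hhom W ((1 + δ) * C) U hU0 hUsmul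
      (fun p hp => hsel p hp.1)
    set ΩF : X → Y := fun p => if p ∈ U then Ψ p else Ω p with hΩF
    have hΩFval : ∀ p, ΩF p = if p ∈ U then Ψ p else Ω p := fun p => rfl
    -- pointwise difference bound
    have hdiff : ∀ p, ‖ΩF p - Ω p‖ ≤ (1 + δ) * C * ‖p‖ := by
      intro p
      rw [hΩFval]
      by_cases hp : p ∈ U
      · rw [if_pos hp, norm_sub_rev]
        exact (hΨ p hp).2
      · rw [if_neg hp]
        simp only [sub_self, norm_zero]
        positivity
    -- homogeneity of ΩF
    have hΩFhom : IsHomog ΩF := by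
      intro c p
      by_cases hc : c = 0
      · subst hc
        rw [zero_smul, zero_smul, hΩFval, if_neg hU0, hΩ0]
      by_cases hp : p ∈ U
      · rw [hΩFval, hΩFval, if_pos (hUsmul c hc p hp), if_pos hp]
        exact hΨhom c p
      · have hcp : c • p ∉ U := by
          intro hmem
          apply hp
          have := hUsmul c⁻¹ (inv_ne_zero hc) _ hmem
          rwa [smul_smul, inv_mul_cancel₀ hc, one_smul] at this
        rw [hΩFval, hΩFval, if_neg hcp, if_neg hp]
        exact hhom c p
    -- z-linearity of ΩF
    have hΩFzl : ZlinWith ΩF ((3 + 2 * δ) * C) := by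
      intro m xs
      have h1 : ‖ΩF (∑ j, xs j) - Ω (∑ j, xs j)‖ ≤ (1 + δ) * C * ‖∑ j, xs j‖ := hdiff _
      have h2 : ‖Ω (∑ j, xs j) - ∑ j, Ω (xs j)‖ ≤ C * ∑ j, ‖xs j‖ := hzl m xs
      have h3 : ‖∑ j, Ω (xs j) - ∑ j, ΩF (xs j)‖ ≤ (1 + δ) * C * ∑ j, ‖xs j‖ := by
        rw [← Finset.sum_sub_distrib]
        refine (norm_sum_le _ _).trans ?_
        rw [Finset.mul_sum]
        refine Finset.sum_le_sum fun j _ => ?_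
        rw [norm_sub_rev]
        exact hdiff _
      have h4 : ‖∑ j, xs j‖ ≤ ∑ j, ‖xs j‖ := norm_sum_le _ _
      have hTnn : 0 ≤ ∑ j, ‖xs j‖ := Finset.sum_nonneg fun j _ => norm_nonneg _
      have htri : ‖ΩF (∑ j, xs j) - ∑ j, ΩF (xs j)‖
          ≤ ‖ΩF (∑ j, xs j) - Ω (∑ j, xs j)‖ + ‖Ω (∑ j, xs j) - ∑ j, Ω (xs j)‖
            + ‖∑ j, Ω (xs j) - ∑ j, ΩF (xs j)‖ := by
        have e : ΩF (∑ j, xs j) - ∑ j, ΩF (xs j)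
            = (ΩF (∑ j, xs j) - Ω (∑ j, xs j)) + (Ω (∑ j, xs j) - ∑ j, Ω (xs j))
              + (∑ j, Ω (xs j) - ∑ j, ΩF (xs j)) := by abel
        rw [e]
        exact (norm_add_le _ _).trans (by gcongr; exact norm_add_le _ _)
      have h5 : (1 + δ) * C * ‖∑ j, xs j‖ ≤ (1 + δ) * C * ∑ j, ‖xs j‖ :=
        mul_le_mul_of_nonneg_left h4 (by positivity)
      calc ‖ΩF (∑ j, xs j) - ∑ j, ΩF (xs j)‖
          ≤ ‖ΩF (∑ j, xs j) - Ω (∑ j, xs j)‖ + ‖Ω (∑ j, xs j) - ∑ j, Ω (xs j)‖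
            + ‖∑ j, Ω (xs j) - ∑ j, ΩF (xs j)‖ := htri
        _ ≤ (1 + δ) * C * ∑ j, ‖xs j‖ + C * ∑ j, ‖xs j‖ + (1 + δ) * C * ∑ j, ‖xs j‖ :=
            add_le_add (add_le_add (h1.trans h5) h2) h3
        _ = (3 + 2 * δ) * C * ∑ j, ‖xs j‖ := by ring
    refine ⟨ΩF, ⟨hΩFhom, (3 + 2 * δ) * C, by positivity, hΩFzl⟩, ?_, ?_, ?_, ?_⟩
    · intro k
      have hxk : x k ∉ U := by
        intro hmem
        exact hmem.2.2 k 1 (one_smul ℝ (x k)).symm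
      rw [hΩFval, if_neg hxk]
    · intro p
      refine (hdiff p).trans ?_
      have hcoef : (1 + δ) * C ≤ (1 + ε) * zconst Ω := by nlinarith
      exact mul_le_mul_of_nonneg_right hcoef (norm_nonneg p)
    · have hmem : (3 + 2 * δ) * C ∈ {C' : ℝ | 0 ≤ C' ∧ ZlinWith ΩF C'} :=
        ⟨by positivity, hΩFzl⟩
      have hbdd : BddBelow {C' : ℝ | 0 ≤ C' ∧ ZlinWith ΩF C'} := ⟨0, fun c hc => hc.1⟩
      refine (csInf_le hbdd hmem).trans ?_
      nlinarith
    · have hle : Submodule.span ℝ (ΩF '' (F : Set X))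
          ≤ W ⊔ Submodule.span ℝ (Set.range fun k => Ω (x k)) := by
        rw [Submodule.span_le]
        rintro _ ⟨p, hp, rfl⟩
        by_cases hpU : p ∈ U
        · rw [hΩFval, if_pos hpU]
          exact Submodule.mem_sup_left (hΨ p hpU).1
        · rw [hΩFval, if_neg hpU]
          have : ¬(p ≠ 0 ∧ ∀ (k : Fin n) (c : ℝ), p ≠ c • x k) := fun h => hpU ⟨hp, h⟩
          push_neg at this
          rcases eq_or_ne p 0 with h0 | h0
          · subst h0
            rw [hΩ0]
            exact (W ⊔ _).zero_mem
          · obtain ⟨k, c, hkc⟩ := this h0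
            rw [hkc, hhom c (x k)]
            refine Submodule.mem_sup_right (Submodule.smul_mem _ c ?_)
            exact Submodule.subset_span ⟨k, rfl⟩
      haveI : FiniteDimensional ℝ (Submodule.span ℝ (Set.range fun k => Ω (x k))) :=
        FiniteDimensional.span_of_finite ℝ (Set.finite_range _)
      haveI : FiniteDimensional ℝ
          (W ⊔ Submodule.span ℝ (Set.range fun k => Ω (x k)) : Submodule ℝ Y) := by
        infer_instance
      exact Submodule.finiteDimensional_of_le hle


end
end

section
/- Given a commutative diagram of exact sequences of Banach spaces with rows 0 → Y → X → Z → 0 (associated to a z-linear map ω) and 0 → Y → X' → Z' → 0, with identity on Y, a vertical operator T : X' → X and γ : Z' → Z, the lower sequence is associated with the z-linear map ωγ. -/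
open scoped BigOperators

noncomputable section

/-- Pull-back lemma: in a commutative diagram with identity on `Y` and vertical
maps `T` and `γ`, the lower sequence is associated with `ωγ`. -/
theorem statement5 {Y X Z X' Z' : Type*}
    [NormedAddCommGroup Y] [NormedSpace ℝ Y] [CompleteSpace Y]
    [NormedAddCommGroup X] [NormedSpace ℝ X] [CompleteSpace X]
    [NormedAddCommGroup Z] [NormedSpace ℝ Z] [CompleteSpace Z]
    [NormedAddCommGroup X'] [NormedSpace ℝ X'] [CompleteSpace X']
    [NormedAddCommGroup Z'] [NormedSpace ℝ Z'] [CompleteSpace Z']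
    (ω : Z → Y) (i : Y →L[ℝ] X) (q : X →L[ℝ] Z) (hassoc : IsAssoc ω i q)
    (i' : Y →L[ℝ] X') (q' : X' →L[ℝ] Z') (hexact : IsExactSeq i' q')
    (T : X' →L[ℝ] X) (γ : Z' →L[ℝ] Z)
    (hcomm1 : ∀ y, T (i' y) = i y) (hcomm2 : ∀ x', q (T x') = γ (q' x')) :
    IsAssoc (fun z' => ω (γ z')) i' q' := by
  obtain ⟨hex, b, l, hbhom, ⟨M, hbM⟩, hqb, hql, hiω⟩ := hassoc
  obtain ⟨hiinj, hqsurj, hrange⟩ := hex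
  obtain ⟨hi'inj, hq'surj, hrange'⟩ := hexact
  -- key injectivity: q' x' = 0 and T x' = 0 imply x' = 0
  have hkey : ∀ x' : X', q' x' = 0 → T x' = 0 → x' = 0 := by
    intro x' h1 h2
    have hx : x' ∈ LinearMap.range (i' : Y →ₗ[ℝ] X') := by
      rw [hrange']; exact h1
    obtain ⟨y, hy⟩ := hx
    have hy' : i' y = x' := hy
    have : i y = 0 := by rw [← hcomm1, hy', h2]
    have hy0 : y = 0 := hiinj (by simpa using this)
    rw [← hy', hy0, map_zero]
  -- bounded homogeneous selection B of q'
  obtain ⟨C, hCpos, hC⟩ := q'.exists_preimage_norm_le hq'surj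
  choose s hs hsn using hC
  set B : Z' → X' := fun z =>
    (‖z‖ / 2) • (s (‖z‖⁻¹ • z) - s (-(‖z‖⁻¹ • z))) with hBdef
  have hB0 : B 0 = 0 := by simp [hBdef]
  have hqB : ∀ z, q' (B z) = z := by
    intro z
    rcases eq_or_ne z 0 with rfl | hz
    · simp [hB0]
    · have hnz : ‖z‖ ≠ 0 := norm_ne_zero_iff.mpr hz
      simp only [hBdef, map_smul, map_sub, hs, smul_neg]
      rw [sub_neg_eq_add, ← two_smul ℝ, smul_smul, smul_smul]
      rw [div_mul_comm]
      field_simp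
      exact one_smul ℝ z
  have hBnorm : ∀ z, ‖B z‖ ≤ C * ‖z‖ := by
    intro z
    rcases eq_or_ne z 0 with rfl | hz
    · simp [hB0]
    · have hnz : ‖z‖ ≠ 0 := norm_ne_zero_iff.mpr hz
      have hu : ‖‖z‖⁻¹ • z‖ = 1 := by
        rw [norm_smul, norm_inv, norm_norm, inv_mul_cancel₀ hnz]
      have h1 : ‖s (‖z‖⁻¹ • z)‖ ≤ C := by
        have := hsn (‖z‖⁻¹ • z); rwa [hu, mul_one] at this
      have h2 : ‖s (-(‖z‖⁻¹ • z))‖ ≤ C := by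
        have := hsn (-(‖z‖⁻¹ • z)); rwa [norm_neg, hu, mul_one] at this
      calc ‖B z‖ = (‖z‖ / 2) * ‖s (‖z‖⁻¹ • z) - s (-(‖z‖⁻¹ • z))‖ := by
            rw [hBdef]; simp [norm_smul, abs_of_nonneg (by positivity : (0:ℝ) ≤ ‖z‖/2)]
        _ ≤ (‖z‖ / 2) * (C + C) := by
            gcongr
            exact (norm_sub_le _ _).trans (add_le_add h1 h2)
        _ = C * ‖z‖ := by ring
  have hBneg : ∀ z, B (-z) = -B z := by
    intro z
    show (‖-z‖ / 2) • (s (‖-z‖⁻¹ • -z) - s (-(‖-z‖⁻¹ • -z)))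
        = -((‖z‖ / 2) • (s (‖z‖⁻¹ • z) - s (-(‖z‖⁻¹ • z))))
    have h1 : ‖-z‖⁻¹ • -z = -(‖z‖⁻¹ • z) := by rw [norm_neg, smul_neg]
    rw [h1, norm_neg, neg_neg]
    module
  have hBpos : ∀ (c : ℝ) (z : Z'), 0 < c → B (c • z) = c • B z := by
    intro c z hc
    rcases eq_or_ne z 0 with rfl | hz
    · simp [hB0]
    have hnz : ‖z‖ ≠ 0 := norm_ne_zero_iff.mpr hz
    have h1 : ‖c • z‖⁻¹ • (c • z) = ‖z‖⁻¹ • z := by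
      rw [norm_smul, Real.norm_eq_abs, abs_of_pos hc, smul_smul, mul_inv]
      rw [show c⁻¹ * ‖z‖⁻¹ * c = ‖z‖⁻¹ by field_simp]
    have h2 : ‖c • z‖ = c * ‖z‖ := by
      rw [norm_smul, Real.norm_eq_abs, abs_of_pos hc]
    show (‖c • z‖ / 2) • (s (‖c • z‖⁻¹ • (c • z)) - s (-(‖c • z‖⁻¹ • (c • z))))
        = c • ((‖z‖ / 2) • (s (‖z‖⁻¹ • z) - s (-(‖z‖⁻¹ • z))))
    rw [h1, h2, smul_smul]
    congr 1
    ring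
  have hBhom : IsHomog B := by
    intro c z
    rcases lt_trichotomy c 0 with hneg | hzero | hpos
    · have h1 : c • z = -((-c) • z) := by rw [neg_smul, neg_neg]
      rw [h1, hBneg, hBpos (-c) z (by linarith), neg_smul, neg_neg]
    · subst hzero; simp [hB0]
    · exact hBpos c z hpos
  -- invert i onto ker q
  haveI : CompleteSpace (LinearMap.ker (q : X →ₗ[ℝ] Z)) :=
    (ContinuousLinearMap.isClosed_ker q).completeSpace_coe
  have hmem : ∀ y, i y ∈ LinearMap.ker (q : X →ₗ[ℝ] Z) := by
    intro y; rw [← hrange]; exact ⟨y, rfl⟩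
  set j : Y →L[ℝ] (LinearMap.ker (q : X →ₗ[ℝ] Z)) :=
    i.codRestrict (LinearMap.ker (q : X →ₗ[ℝ] Z)) hmem with hjdef
  have hjinj : LinearMap.ker (j : Y →ₗ[ℝ] (LinearMap.ker (q : X →ₗ[ℝ] Z))) = ⊥ := by
    rw [LinearMap.ker_eq_bot']
    intro m hm
    apply hiinj
    have : (j m : X) = ((0 : LinearMap.ker (q : X →ₗ[ℝ] Z)) : X) := by exact congrArg Subtype.val hm
    simpa [hjdef] using this
  have hjsurj : LinearMap.range (j : Y →ₗ[ℝ] (LinearMap.ker (q : X →ₗ[ℝ] Z))) = ⊤ := by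
    rw [LinearMap.range_eq_top]
    rintro ⟨x, hx⟩
    have : x ∈ LinearMap.range (i : Y →ₗ[ℝ] X) := by rw [hrange]; exact hx
    obtain ⟨y, hy⟩ := this
    exact ⟨y, by ext; simpa [hjdef] using hy⟩
  set e := ContinuousLinearEquiv.ofBijective j hjinj hjsurj with hedef
  have hiy : ∀ y, (j y : X) = i y := fun y => rfl
  have hylow : ∀ y : Y, ‖y‖ ≤ ‖e.symm.toContinuousLinearMap‖ * ‖i y‖ := by
    intro y
    have h1 : e.symm (e y) = y := e.symm_apply_apply y
    have h2 : ‖e.symm (e y)‖ ≤ ‖e.symm.toContinuousLinearMap‖ * ‖e y‖ :=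
      e.symm.toContinuousLinearMap.le_opNorm _
    have h3 : ‖(e y : X)‖ = ‖i y‖ := by
      rw [hedef, ContinuousLinearEquiv.coeFn_ofBijective]
      exact congrArg norm (hiy y)
    rw [h1] at h2
    rwa [show ‖e y‖ = ‖i y‖ from h3] at h2
  set N := ‖e.symm.toContinuousLinearMap‖ with hNdef
  -- the corrector h
  have hmemTB : ∀ z', T (B z') - b (γ z') ∈ LinearMap.ker (q : X →ₗ[ℝ] Z) := by
    intro z'
    have : q (T (B z') - b (γ z')) = 0 := by
      rw [map_sub, hcomm2, hqB, hqb, sub_self]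
    exact this
  set h : Z' → Y := fun z' => e.symm ⟨T (B z') - b (γ z'), hmemTB z'⟩ with hhdef
  have hih : ∀ z', i (h z') = T (B z') - b (γ z') := by
    intro z'
    have := e.apply_symm_apply ⟨T (B z') - b (γ z'), hmemTB z'⟩
    have h2 : (e (h z') : X) = T (B z') - b (γ z') := by
      rw [hhdef]; exact congrArg Subtype.val this
    rw [hedef, ContinuousLinearEquiv.coeFn_ofBijective] at h2
    rw [← hiy]; exact h2
  have hhnorm : ∀ z', ‖h z'‖ ≤ N * ‖T (B z') - b (γ z')‖ := by
    intro z'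
    have := hylow (h z')
    rwa [hih] at this
  -- define b'' and l'
  set b'' : Z' → X' := fun z' => B z' - i' (h z') with hb''def
  have hrange'sub : ∀ y, q' (i' y) = 0 := by
    intro y
    have : i' y ∈ LinearMap.ker (q' : X' →ₗ[ℝ] Z') := by rw [← hrange']; exact ⟨y, rfl⟩
    exact this
  have hqb'' : ∀ z', q' (b'' z') = z' := by
    intro z'; rw [hb''def]; simp only [map_sub, hqB, hrange'sub, sub_zero]
  have hTb'' : ∀ z', T (b'' z') = b (γ z') := by
    intro z'
    rw [hb''def]
    simp only [map_sub, hcomm1, hih]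
    abel
  set lf : Z' → X' := fun z' => b'' z' - i' (ω (γ z')) with hlfdef
  have hqlf : ∀ z', q' (lf z') = z' := by
    intro z'; rw [hlfdef]; simp only [map_sub, hqb'', hrange'sub, sub_zero]
  have hTlf : ∀ z', T (lf z') = l (γ z') := by
    intro z'
    rw [hlfdef]
    simp only [map_sub, hTb'', hcomm1, hiω]
    abel
  have hlfadd : ∀ a c : Z', lf (a + c) = lf a + lf c := by
    intro a c
    have h1 : q' (lf (a + c) - (lf a + lf c)) = 0 := by
      simp only [map_sub, map_add, hqlf]; abel
    have h2 : T (lf (a + c) - (lf a + lf c)) = 0 := by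
      simp only [map_sub, map_add, hTlf]
      abel
    exact sub_eq_zero.mp (hkey _ h1 h2)
  have hlfsmul : ∀ (c : ℝ) (a : Z'), lf (c • a) = c • lf a := by
    intro c a
    have h1 : q' (lf (c • a) - c • lf a) = 0 := by
      simp only [map_sub, map_smul, hqlf]; abel
    have h2 : T (lf (c • a) - c • lf a) = 0 := by
      simp only [map_sub, map_smul, hTlf]
      abel
    exact sub_eq_zero.mp (hkey _ h1 h2)
  set l' : Z' →ₗ[ℝ] X' :=
    { toFun := lf
      map_add' := hlfadd
      map_smul' := fun c a => by simpa using hlfsmul c a } with hl'def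
  have hhhom : ∀ (c : ℝ) (z' : Z'), h (c • z') = c • h z' := by
    intro c z'
    apply hiinj
    rw [map_smul i, hih, hih, hBhom c z', map_smul T, map_smul γ, hbhom c (γ z'), smul_sub]
  have hb''hom : IsHomog b'' := by
    intro c z'
    show B (c • z') - i' (h (c • z')) = c • (B z' - i' (h z'))
    rw [hBhom, hhhom, map_smul, smul_sub]
  have hMnn : ∀ z : Z, ‖b z‖ ≤ max M 0 * ‖z‖ := by
    intro z
    exact (hbM z).trans (by gcongr; exact le_max_left M 0)
  have hb''bound : ∀ z', ‖b'' z'‖ ≤ (C + ‖i'‖ * (N * (‖T‖ * C + max M 0 * ‖γ‖))) * ‖z'‖ := by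
    intro z'
    have e1 : ‖T (B z') - b (γ z')‖ ≤ (‖T‖ * C + max M 0 * ‖γ‖) * ‖z'‖ := by
      calc ‖T (B z') - b (γ z')‖ ≤ ‖T (B z')‖ + ‖b (γ z')‖ := norm_sub_le _ _
        _ ≤ ‖T‖ * (C * ‖z'‖) + max M 0 * (‖γ‖ * ‖z'‖) := by
            gcongr
            · exact (T.le_opNorm _).trans (by gcongr; exact hBnorm z')
            · exact (hMnn _).trans
                (mul_le_mul_of_nonneg_left (γ.le_opNorm z') (le_max_right M 0))
        _ = (‖T‖ * C + max M 0 * ‖γ‖) * ‖z'‖ := by ring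
    calc ‖b'' z'‖ ≤ ‖B z'‖ + ‖i' (h z')‖ := norm_sub_le _ _
      _ ≤ C * ‖z'‖ + ‖i'‖ * (N * ((‖T‖ * C + max M 0 * ‖γ‖) * ‖z'‖)) := by
          gcongr
          · exact hBnorm z'
          · exact (i'.le_opNorm _).trans (by gcongr; exact (hhnorm z').trans (by gcongr))
      _ = (C + ‖i'‖ * (N * (‖T‖ * C + max M 0 * ‖γ‖))) * ‖z'‖ := by ring
  refine ⟨⟨hi'inj, hq'surj, hrange'⟩, b'', l', hb''hom,
    ⟨C + ‖i'‖ * (N * (‖T‖ * C + max M 0 * ‖γ‖)), hb''bound⟩, hqb'', ?_, ?_⟩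
  · intro z'
    show q' (lf z') = z'
    exact hqlf z'
  · intro z'
    show i' (ω (γ z')) = b'' z' - lf z'
    show i' (ω (γ z')) = b'' z' - (b'' z' - i' (ω (γ z')))
    abel


end
end

section
/- Given a commutative diagram of exact sequences 0 → Y →^i X →^q Z → 0 ≡ ω and 0 → Y' →^{i'} X' →^{q'} Z → 0 with vertical maps α : Y → Y', T : X → X' and identity on Z, the z-linear map ωq' is associated to the exact sequence 0 → Y →^d Y' ⊕ X →^m X' → 0, where d(y) = (−αy, i y) and m(y', x) = i'y' + Tx. -/
open scoped BigOperators

noncomputable section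

/-- Diagonal sequence of a push-out diagram: `ωq'` is associated with the exact
sequence `0 → Y → Y' ⊕ X → X' → 0` where `d y = (−αy, i y)` and
`m (y', x) = i' y' + T x`. -/
theorem statement6 {Y X Z Y' X' : Type*}
    [NormedAddCommGroup Y] [NormedSpace ℝ Y] [CompleteSpace Y]
    [NormedAddCommGroup X] [NormedSpace ℝ X] [CompleteSpace X]
    [NormedAddCommGroup Z] [NormedSpace ℝ Z] [CompleteSpace Z]
    [NormedAddCommGroup Y'] [NormedSpace ℝ Y'] [CompleteSpace Y']
    [NormedAddCommGroup X'] [NormedSpace ℝ X'] [CompleteSpace X']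
    (ω : Z → Y) (i : Y →L[ℝ] X) (q : X →L[ℝ] Z) (hassoc : IsAssoc ω i q)
    (i' : Y' →L[ℝ] X') (q' : X' →L[ℝ] Z) (hexact : IsExactSeq i' q')
    (α : Y →L[ℝ] Y') (T : X →L[ℝ] X')
    (hcomm1 : ∀ y, T (i y) = i' (α y)) (hcomm2 : ∀ x, q' (T x) = q x) :
    IsAssoc (fun x' : X' => ω (q' x'))
      (ContinuousLinearMap.prod (-α) i) (ContinuousLinearMap.coprod i' T) := by
  obtain ⟨⟨hiinj, hqsurj, hiq⟩, b₀, l₀, hb₀hom, ⟨M₀, hM₀⟩, hqb₀, hql₀, hωb₀l₀⟩ := hassoc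
  obtain ⟨hi'inj, hq'surj, hi'q'⟩ := hexact
  -- the kernel of q' as a Banach space
  set K : Submodule ℝ X' := LinearMap.ker (q' : X' →ₗ[ℝ] Z) with hK
  rw [hK] at hi'q'
  have hq'i' : ∀ y', q' (i' y') = 0 := by
    intro y'
    have : i' y' ∈ LinearMap.ker (q' : X' →ₗ[ℝ] Z) := by
      rw [← hi'q']; exact ⟨y', rfl⟩
    simpa using this
  have hmemK : ∀ (f : Z → X), (∀ z, q (f z) = z) → ∀ x' : X', x' - T (f (q' x')) ∈ K := by
    intro f hf x'
    simp [hK, LinearMap.mem_ker, map_sub, hcomm2, hf]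
  -- i' corestricted to K, as a continuous linear equiv
  have hmemi : ∀ y', i' y' ∈ K := fun y' => by simp [hK, LinearMap.mem_ker, hq'i']
  set j : Y' →L[ℝ] K := i'.codRestrict K hmemi with hj
  have hjker : LinearMap.ker (j : Y' →ₗ[ℝ] K) = ⊥ := by
    rw [Submodule.eq_bot_iff]
    intro a ha
    have h0 : j a = 0 := ha
    have : i' a = 0 := by simpa [hj] using congrArg Subtype.val h0
    exact hi'inj (by simpa using this)
  have hjrange : LinearMap.range (j : Y' →ₗ[ℝ] K) = ⊤ := by
    rw [LinearMap.range_eq_top]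
    rintro ⟨x', hx'⟩
    have : x' ∈ LinearMap.ker (q' : X' →ₗ[ℝ] Z) := hx'
    rw [← hi'q'] at this
    obtain ⟨y', hy'⟩ := this
    exact ⟨y', by simp [hj]; exact Subtype.ext hy'⟩
  obtain ⟨e, hi'e⟩ : ∃ e : Y' ≃L[ℝ] K, ∀ w : K, i' (e.symm w) = (w : X') := by
    refine ⟨ContinuousLinearEquiv.ofBijective j hjker hjrange, fun w => ?_⟩
    have : j ((ContinuousLinearEquiv.ofBijective j hjker hjrange).symm w) = w :=
      (ContinuousLinearEquiv.ofBijective j hjker hjrange).apply_symm_apply w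
    exact congrArg Subtype.val this
  -- the homogeneous bounded selection
  set b : X' → Y' × X :=
    fun x' => (e.symm ⟨x' - T (b₀ (q' x')), hmemK b₀ hqb₀ x'⟩, b₀ (q' x')) with hb
  -- the linear selection
  set A : X' →ₗ[ℝ] X' :=
    LinearMap.id - (T : X →ₗ[ℝ] X') ∘ₗ l₀ ∘ₗ (q' : X' →ₗ[ℝ] Z) with hA
  have hAmem : ∀ x', A x' ∈ K := by
    intro x'
    have := hmemK l₀ hql₀ x'
    simpa [hA] using this
  set lmap : X' →ₗ[ℝ] Y' × X :=
    ((e.symm : K →ₗ[ℝ] Y') ∘ₗ A.codRestrict K hAmem).prod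
      (l₀ ∘ₗ (q' : X' →ₗ[ℝ] Z)) with hl
  have hlmap : ∀ x', lmap x' =
      (e.symm ⟨x' - T (l₀ (q' x')), hmemK l₀ hql₀ x'⟩, l₀ (q' x')) := by
    intro x'
    simp only [hl, LinearMap.prod_apply, LinearMap.coe_comp, Function.comp_apply,
      Function.prod, LinearMap.codRestrict_apply]
    have harg : (LinearMap.codRestrict K A hAmem) x' =
        (⟨x' - T (l₀ (q' x')), hmemK l₀ hql₀ x'⟩ : K) := Subtype.ext (by simp [hA])
    rw [harg]
    rfl
  refine ⟨⟨?_, ?_, ?_⟩, b, lmap, ?_, ?_, ?_, ?_, ?_⟩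
  · -- injectivity of d
    intro y₁ y₂ h
    simp only [ContinuousLinearMap.prod_apply, Prod.mk.injEq] at h
    exact hiinj h.2
  · -- surjectivity of m
    intro x'
    refine ⟨lmap x', ?_⟩
    rw [hlmap]
    simp only [ContinuousLinearMap.coprod_apply]
    rw [hi'e]
    exact sub_add_cancel _ _
  · -- exactness at middle
    ext ⟨y', x⟩
    simp only [LinearMap.mem_range, LinearMap.mem_ker, ContinuousLinearMap.coe_coe,
      ContinuousLinearMap.prod_apply, ContinuousLinearMap.coprod_apply, Prod.mk.injEq,
      ContinuousLinearMap.neg_apply]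
    constructor
    · rintro ⟨y, hy1, hy2⟩
      rw [← hy1, ← hy2, hcomm1]
      simp
    · intro h
      have hx : x ∈ LinearMap.ker (q : X →ₗ[ℝ] Z) := by
        have : q' (i' y' + T x) = 0 := by rw [h]; simp
        simpa [hq'i', hcomm2] using this
      rw [← hiq] at hx
      obtain ⟨y, hy⟩ := hx
      have hy' : i y = x := hy
      refine ⟨y, ?_, hy'⟩
      apply hi'inj
      have hT : T x = i' (α y) := by rw [← hy']; exact hcomm1 y
      have h2 : i' y' = -T x := by linear_combination (norm := module) h
      rw [map_neg, h2, hT]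
  · -- homogeneity of b
    intro c x'
    have hq'c : q' (c • x') = c • q' x' := map_smul q' c x'
    have hfst : e.symm ⟨c • x' - T (b₀ (q' (c • x'))), hmemK b₀ hqb₀ (c • x')⟩ =
        c • e.symm ⟨x' - T (b₀ (q' x')), hmemK b₀ hqb₀ x'⟩ := by
      rw [← map_smul]
      exact congrArg _ (Subtype.ext (by simp [hq'c, hb₀hom c (q' x'), smul_sub]))
    have hsnd : b₀ (q' (c • x')) = c • b₀ (q' x') := by rw [hq'c, hb₀hom]
    show (e.symm ⟨c • x' - T (b₀ (q' (c • x'))), hmemK b₀ hqb₀ (c • x')⟩,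
        b₀ (q' (c • x'))) = c • (e.symm ⟨x' - T (b₀ (q' x')), hmemK b₀ hqb₀ x'⟩, b₀ (q' x'))
    rw [Prod.smul_mk, Prod.mk.injEq]
    exact ⟨hfst, hsnd⟩
  · -- boundedness of b
    obtain ⟨C, hC0', hCbd⟩ := (e.symm : K →L[ℝ] Y').bound
    have hC0 : 0 ≤ C := hC0'.le
    obtain ⟨M₁, hM₁0, hb₀bd⟩ : ∃ M₁ ≥ 0, ∀ z, ‖b₀ z‖ ≤ M₁ * ‖z‖ :=
      ⟨max M₀ 0, le_max_right _ _, fun z =>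
        (hM₀ z).trans (mul_le_mul_of_nonneg_right (le_max_left _ _) (norm_nonneg z))⟩
    refine ⟨max (C * (1 + ‖T‖ * (M₁ * ‖q'‖))) (M₁ * ‖q'‖), fun x' => ?_⟩
    have hq'bd : ‖q' x'‖ ≤ ‖q'‖ * ‖x'‖ := q'.le_opNorm x'
    have hx0 : (0:ℝ) ≤ ‖x'‖ := norm_nonneg _
    have hT0 : (0:ℝ) ≤ ‖T‖ := norm_nonneg _
    have h2 : ‖b₀ (q' x')‖ ≤ M₁ * ‖q'‖ * ‖x'‖ := by
      calc ‖b₀ (q' x')‖ ≤ M₁ * ‖q' x'‖ := hb₀bd _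
        _ ≤ M₁ * (‖q'‖ * ‖x'‖) := mul_le_mul_of_nonneg_left hq'bd hM₁0
        _ = M₁ * ‖q'‖ * ‖x'‖ := by ring
    have h1 : ‖e.symm ⟨x' - T (b₀ (q' x')), hmemK b₀ hqb₀ x'⟩‖ ≤
        C * (1 + ‖T‖ * (M₁ * ‖q'‖)) * ‖x'‖ := by
      have hcoe : ‖(⟨x' - T (b₀ (q' x')), hmemK b₀ hqb₀ x'⟩ : K)‖ =
          ‖x' - T (b₀ (q' x'))‖ := rfl
      have hTb : ‖T (b₀ (q' x'))‖ ≤ ‖T‖ * (M₁ * ‖q'‖ * ‖x'‖) :=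
        (T.le_opNorm _).trans (mul_le_mul_of_nonneg_left h2 hT0)
      have hsub : ‖x' - T (b₀ (q' x'))‖ ≤ ‖x'‖ + ‖T‖ * (M₁ * ‖q'‖ * ‖x'‖) :=
        (norm_sub_le _ _).trans (by linarith)
      calc ‖e.symm ⟨x' - T (b₀ (q' x')), hmemK b₀ hqb₀ x'⟩‖
          ≤ C * ‖x' - T (b₀ (q' x'))‖ := by rw [← hcoe]; exact hCbd _
        _ ≤ C * (‖x'‖ + ‖T‖ * (M₁ * ‖q'‖ * ‖x'‖)) :=
            mul_le_mul_of_nonneg_left hsub hC0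
        _ = C * (1 + ‖T‖ * (M₁ * ‖q'‖)) * ‖x'‖ := by ring
    rw [hb, Prod.norm_def]
    apply max_le
    · exact h1.trans (mul_le_mul_of_nonneg_right (le_max_left _ _) hx0)
    · have : M₁ * ‖q'‖ * ‖x'‖ ≤ max (C * (1 + ‖T‖ * (M₁ * ‖q'‖))) (M₁ * ‖q'‖) * ‖x'‖ :=
        mul_le_mul_of_nonneg_right (le_max_right _ _) hx0
      exact h2.trans this
  · -- m ∘ b = id
    intro x'
    simp only [hb, ContinuousLinearMap.coprod_apply]
    rw [hi'e]
    exact sub_add_cancel _ _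
  · -- m ∘ lmap = id
    intro x'
    rw [hlmap]
    simp only [ContinuousLinearMap.coprod_apply]
    rw [hi'e]
    exact sub_add_cancel _ _
  · -- d (ω (q' x')) = b x' - lmap x'
    intro x'
    rw [hlmap, hb]
    simp only [ContinuousLinearMap.prod_apply, ContinuousLinearMap.neg_apply, Prod.mk_sub_mk]
    rw [Prod.mk.injEq]
    constructor
    · apply hi'inj
      rw [map_neg, map_sub, hi'e, hi'e, ← hcomm1]
      rw [hωb₀l₀]
      simp [map_sub]
    · exact hωb₀l₀ (q' x')


end
end

section
/- An exact sequence of Banach spaces 0 → Y → X → Z → 0 locally splits if and only if its bidual sequence 0 → Y** → X** → Z** → 0 splits. -/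
open scoped BigOperators

noncomputable section

/-- The dual map (adjoint) of a continuous linear map between Banach spaces. -/
noncomputable def dualMapCLM {A B : Type*} [NormedAddCommGroup A] [NormedSpace ℝ A]
    [NormedAddCommGroup B] [NormedSpace ℝ B] (f : A →L[ℝ] B) :
    StrongDual ℝ B →L[ℝ] StrongDual ℝ A :=
  (ContinuousLinearMap.compL ℝ A B ℝ).flip f


section Helpers

open ContinuousLinearMap

variable {A B : Type*} [NormedAddCommGroup A] [NormedSpace ℝ A]
  [NormedAddCommGroup B] [NormedSpace ℝ B]

theorem dualMapCLM_apply (f : A →L[ℝ] B) (g : StrongDual ℝ B) (a : A) :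
    dualMapCLM f g a = g (f a) := rfl

/-- Factorization of a functional vanishing on the kernel of a quantitatively
surjective map. -/
theorem factor_through {C : ℝ} (S : A →L[ℝ] B)
    (hS : ∀ b, ∃ a, S a = b ∧ ‖a‖ ≤ C * ‖b‖)
    (f : A →L[ℝ] ℝ) (hf : ∀ a, S a = 0 → f a = 0) :
    ∃ g : B →L[ℝ] ℝ, ∀ a, g (S a) = f a := by
  have key : ∀ a a' : A, S a = S a' → f a = f a' := by
    intro a a' h
    have : f (a - a') = 0 := hf _ (by simp [h])
    have := sub_eq_zero.mpr h
    simpa [map_sub, sub_eq_zero] using ‹f (a - a') = 0›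
  let g₀ : B →ₗ[ℝ] ℝ :=
    { toFun := fun b => f (hS b).choose
      map_add' := by
        intro b₁ b₂
        have h1 := (hS b₁).choose_spec.1
        have h2 := (hS b₂).choose_spec.1
        have h3 := (hS (b₁ + b₂)).choose_spec.1
        have : S (hS (b₁ + b₂)).choose = S ((hS b₁).choose + (hS b₂).choose) := by
          simp [h1, h2, h3]
        simpa [map_add] using key _ _ this
      map_smul' := by
        intro c b
        have h1 := (hS b).choose_spec.1
        have h3 := (hS (c • b)).choose_spec.1
        have : S (hS (c • b)).choose = S (c • (hS b).choose) := by
          simp [h1, h3]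
        simpa [map_smul] using key _ _ this }
  refine ⟨LinearMap.mkContinuous g₀ (‖f‖ * C) ?_, ?_⟩
  · intro b
    have h1 := (hS b).choose_spec.1
    have h2 := (hS b).choose_spec.2
    calc ‖g₀ b‖ = ‖f (hS b).choose‖ := rfl
      _ ≤ ‖f‖ * ‖(hS b).choose‖ := f.le_opNorm _
      _ ≤ ‖f‖ * (C * ‖b‖) := by
          exact mul_le_mul_of_nonneg_left h2 (norm_nonneg f)
      _ = ‖f‖ * C * ‖b‖ := by ring
  · intro a
    have h1 := (hS (S a)).choose_spec.1
    exact key _ _ h1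

/-- Hahn–Banach: quantitative surjectivity of the dual of a bounded-below map. -/
theorem dual_quantsurj {c : ℝ} (hc : 0 < c) (S : A →L[ℝ] B)
    (hS : ∀ a, c * ‖a‖ ≤ ‖S a‖) (g : A →L[ℝ] ℝ) :
    ∃ f : B →L[ℝ] ℝ, (∀ a, f (S a) = g a) ∧ ‖f‖ ≤ c⁻¹ * ‖g‖ := by
  have hinj : Function.Injective S := by
    intro a a' h
    have : c * ‖a - a'‖ ≤ ‖S (a - a')‖ := hS _
    have h0 : S (a - a') = 0 := by simp [map_sub, h]
    rw [h0, norm_zero] at this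
    have h2 : ‖a - a'‖ ≤ 0 := by nlinarith [norm_nonneg (a - a')]
    exact sub_eq_zero.mp (norm_eq_zero.mp (le_antisymm h2 (norm_nonneg _)))
  let e : A ≃ₗ[ℝ] LinearMap.range (S : A →ₗ[ℝ] B) :=
    LinearEquiv.ofInjective (S : A →ₗ[ℝ] B) hinj
  have he : ∀ a : A, ((e a : LinearMap.range (S : A →ₗ[ℝ] B)) : B) = S a := fun a => rfl
  let φ₀ : LinearMap.range (S : A →ₗ[ℝ] B) →ₗ[ℝ] ℝ := g.toLinearMap.comp e.symm.toLinearMap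
  have hφ₀ : ∀ p, ‖φ₀ p‖ ≤ (c⁻¹ * ‖g‖) * ‖p‖ := by
    intro p
    have h1 : c * ‖e.symm p‖ ≤ ‖S (e.symm p)‖ := hS _
    have h2 : ((e (e.symm p) : LinearMap.range (S : A →ₗ[ℝ] B)) : B) = S (e.symm p) := he _
    rw [e.apply_symm_apply] at h2
    rw [← h2] at h1
    have h3 : ‖e.symm p‖ ≤ c⁻¹ * ‖(p : B)‖ := by
      rw [le_inv_mul_iff₀ hc]
      exact h1
    calc ‖φ₀ p‖ = ‖g (e.symm p)‖ := rfl
      _ ≤ ‖g‖ * ‖e.symm p‖ := g.le_opNorm _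
      _ ≤ ‖g‖ * (c⁻¹ * ‖(p : B)‖) :=
          mul_le_mul_of_nonneg_left h3 (norm_nonneg g)
      _ = (c⁻¹ * ‖g‖) * ‖p‖ := by
          rw [Submodule.norm_coe]; ring
  let φ : LinearMap.range (S : A →ₗ[ℝ] B) →L[ℝ] ℝ := LinearMap.mkContinuous φ₀ _ hφ₀
  obtain ⟨F, hF, hFnorm⟩ := exists_extension_norm_eq
    (LinearMap.range (S : A →ₗ[ℝ] B)) φ
  refine ⟨F, ?_, ?_⟩
  · intro a
    have : F (S a) = φ ⟨S a, LinearMap.mem_range_self _ a⟩ := hF ⟨S a, LinearMap.mem_range_self _ a⟩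
    rw [this]
    show g (e.symm ⟨S a, _⟩) = g a
    congr 1
    have : e a = ⟨S a, LinearMap.mem_range_self _ a⟩ := rfl
    rw [← this, e.symm_apply_apply]
  · rw [hFnorm]
    exact LinearMap.mkContinuous_norm_le φ₀
      (by positivity) hφ₀

/-- Dual of a quantitatively surjective map is bounded below. -/
theorem dual_bdd_below {C : ℝ} (hC : 0 ≤ C) (S : A →L[ℝ] B)
    (hS : ∀ b, ∃ a, S a = b ∧ ‖a‖ ≤ C * ‖b‖) (g : B →L[ℝ] ℝ) :
    ‖g‖ ≤ C * ‖dualMapCLM S g‖ := by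
  apply ContinuousLinearMap.opNorm_le_bound g (by positivity)
  intro b
  obtain ⟨a, ha, hab⟩ := hS b
  calc ‖g b‖ = ‖(dualMapCLM S g) a‖ := by rw [dualMapCLM_apply, ha]
    _ ≤ ‖dualMapCLM S g‖ * ‖a‖ := (dualMapCLM S g).le_opNorm a
    _ ≤ ‖dualMapCLM S g‖ * (C * ‖b‖) :=
        mul_le_mul_of_nonneg_left hab (norm_nonneg _)
    _ = C * ‖dualMapCLM S g‖ * ‖b‖ := by ring

/-- A bounded-below map whose range absorbs a projection-like operator
admits a bounded left inverse. -/
theorem exists_left_inverse {c : ℝ} (hc : 0 < c)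
    (S : A →L[ℝ] B) (hS : ∀ a, c * ‖a‖ ≤ ‖S a‖)
    (P : B →L[ℝ] B) (hP1 : ∀ b, ∃ a, S a = P b) (hP2 : ∀ a, P (S a) = S a) :
    ∃ u : B →L[ℝ] A, ∀ a, u (S a) = a := by
  have hinj : ∀ a a' : A, S a = S a' → a = a' := by
    intro a a' h
    have h1 : c * ‖a - a'‖ ≤ ‖S (a - a')‖ := hS _
    have h0 : S (a - a') = 0 := by simp [map_sub, h]
    rw [h0, norm_zero] at h1
    have h2 : ‖a - a'‖ ≤ 0 := by nlinarith [norm_nonneg (a - a')]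
    exact sub_eq_zero.mp (norm_eq_zero.mp (le_antisymm h2 (norm_nonneg _)))
  let u₀ : B →ₗ[ℝ] A :=
    { toFun := fun b => (hP1 b).choose
      map_add' := by
        intro b₁ b₂
        apply hinj
        show S (hP1 (b₁ + b₂)).choose = S ((hP1 b₁).choose + (hP1 b₂).choose)
        calc S (hP1 (b₁ + b₂)).choose = P (b₁ + b₂) := (hP1 (b₁ + b₂)).choose_spec
          _ = P b₁ + P b₂ := map_add P b₁ b₂
          _ = S (hP1 b₁).choose + S (hP1 b₂).choose := by
              rw [(hP1 b₁).choose_spec, (hP1 b₂).choose_spec]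
          _ = S ((hP1 b₁).choose + (hP1 b₂).choose) := (map_add S _ _).symm
      map_smul' := by
        intro x b
        apply hinj
        show S (hP1 (x • b)).choose = S (x • (hP1 b).choose)
        calc S (hP1 (x • b)).choose = P (x • b) := (hP1 (x • b)).choose_spec
          _ = x • P b := map_smul P x b
          _ = x • S (hP1 b).choose := by rw [(hP1 b).choose_spec]
          _ = S (x • (hP1 b).choose) := (map_smul S x _).symm }
  refine ⟨LinearMap.mkContinuous u₀ (c⁻¹ * ‖P‖) ?_, ?_⟩
  · intro b
    have h1 : S (u₀ b) = P b := (hP1 b).choose_spec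
    have h2 : c * ‖u₀ b‖ ≤ ‖S (u₀ b)‖ := hS _
    rw [h1] at h2
    have h3 : ‖P b‖ ≤ ‖P‖ * ‖b‖ := P.le_opNorm b
    rw [mul_comm c _, ← le_div_iff₀ hc] at h2
    calc ‖u₀ b‖ ≤ ‖P b‖ / c := h2
      _ ≤ ‖P‖ * ‖b‖ / c := by gcongr
      _ = c⁻¹ * ‖P‖ * ‖b‖ := by rw [div_eq_mul_inv]; ring
  · intro a
    apply hinj
    show S (hP1 (S a)).choose = S a
    rw [(hP1 (S a)).choose_spec, hP2]

end Helpers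

set_option maxHeartbeats 1600000 in
/-- Kalton: an exact sequence locally splits iff its bidual sequence splits. -/
theorem statement8 {Y X Z : Type*}
    [NormedAddCommGroup Y] [NormedSpace ℝ Y] [CompleteSpace Y]
    [NormedAddCommGroup X] [NormedSpace ℝ X] [CompleteSpace X]
    [NormedAddCommGroup Z] [NormedSpace ℝ Z] [CompleteSpace Z]
    (i : Y →L[ℝ] X) (q : X →L[ℝ] Z) (hexact : IsExactSeq i q) :
    LocSplits i q ↔
      Splits (dualMapCLM (dualMapCLM i)) (dualMapCLM (dualMapCLM q)) := by
  obtain ⟨hinj, hsurj, hker⟩ := hexact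
  have hqi : ∀ y, q (i y) = 0 := by
    intro y
    have : i y ∈ LinearMap.ker (q : X →ₗ[ℝ] Z) := hker ▸ LinearMap.mem_range_self _ y
    exact this
  obtain ⟨σ, hσ⟩ := q.exists_nonlinearRightInverse_of_surjective
    (LinearMap.range_eq_top.mpr hsurj)
  have hqsurj : ∀ z, ∃ x, q x = z ∧ ‖x‖ ≤ (σ.nnnorm : ℝ) * ‖z‖ :=
    fun z => ⟨σ z, σ.right_inv z, σ.bound z⟩
  have hCpos : (0 : ℝ) < σ.nnnorm := hσ
  -- factorization: functionals vanishing on range i factor through q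
  have hfactor : ∀ f : StrongDual ℝ X, (∀ y, f (i y) = 0) →
      ∃ g : StrongDual ℝ Z, ∀ x, g (q x) = f x := by
    intro f hf
    apply factor_through q hqsurj f
    intro x hx
    have hx' : x ∈ LinearMap.ker (q : X →ₗ[ℝ] Z) := hx
    rw [← hker] at hx'
    obtain ⟨y, rfl⟩ := hx'
    exact hf y
  constructor
  · rintro ⟨s, hs⟩
    -- q* is bounded below
    have hqd : ∀ g : StrongDual ℝ Z,
        ((σ.nnnorm : ℝ))⁻¹ * ‖g‖ ≤ ‖dualMapCLM q g‖ := by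
      intro g
      have h := dual_bdd_below hCpos.le q hqsurj g
      have h2 := mul_le_mul_of_nonneg_left h (inv_nonneg.mpr hCpos.le)
      rwa [← mul_assoc, inv_mul_cancel₀ hCpos.ne', one_mul] at h2
    set P : StrongDual ℝ X →L[ℝ] StrongDual ℝ X :=
      ContinuousLinearMap.id ℝ _ - s.comp (dualMapCLM i) with hP
    have hP1 : ∀ f, ∃ g, dualMapCLM q g = P f := by
      intro f
      have hker' : ∀ y, (P f) (i y) = 0 := by
        intro y
        have h1 : (P f) (i y) = f (i y) - s (dualMapCLM i f) (i y) := rfl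
        rw [h1, hs, dualMapCLM_apply, sub_self]
      obtain ⟨g, hg⟩ := hfactor (P f) hker'
      exact ⟨g, ContinuousLinearMap.ext fun x => hg x⟩
    have hP2 : ∀ g, P (dualMapCLM q g) = dualMapCLM q g := by
      intro g
      have h0 : dualMapCLM i (dualMapCLM q g) = 0 := by
        ext y
        simp [dualMapCLM_apply, hqi]
      simp only [hP, ContinuousLinearMap.sub_apply, ContinuousLinearMap.id_apply,
        ContinuousLinearMap.comp_apply, h0, map_zero, sub_zero]
    obtain ⟨u, hu⟩ := exists_left_inverse (inv_pos.mpr hCpos) (dualMapCLM q) hqd P hP1 hP2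
    refine ⟨dualMapCLM u, ?_⟩
    intro ζ
    ext g
    show ζ (u (dualMapCLM q g)) = ζ g
    rw [hu]
  · rintro ⟨r, hr⟩
    -- i is bounded below
    haveI : CompleteSpace (LinearMap.ker (q : X →ₗ[ℝ] Z)) :=
      (ContinuousLinearMap.isClosed_ker q).completeSpace_coe
    have hjmem : ∀ y, i y ∈ LinearMap.ker (q : X →ₗ[ℝ] Z) := by
      intro y; rw [← hker]; exact LinearMap.mem_range_self _ y
    set j : Y →L[ℝ] (LinearMap.ker (q : X →ₗ[ℝ] Z)) :=
      i.codRestrict _ hjmem with hj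
    have hjinj : LinearMap.ker (j : Y →ₗ[ℝ] (LinearMap.ker (q : X →ₗ[ℝ] Z))) = ⊥ := by
      rw [LinearMap.ker_eq_bot]
      intro a b hab
      exact hinj (congrArg Subtype.val hab)
    have hjsurj : LinearMap.range (j : Y →ₗ[ℝ] (LinearMap.ker (q : X →ₗ[ℝ] Z))) = ⊤ := by
      rw [LinearMap.range_eq_top]
      rintro ⟨x, hx⟩
      have hx' : x ∈ LinearMap.range (i : Y →ₗ[ℝ] X) := hker ▸ hx
      obtain ⟨y, hy⟩ := hx'
      exact ⟨y, Subtype.ext hy⟩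
    set e := ContinuousLinearEquiv.ofBijective j hjinj hjsurj with he
    set M : ℝ := ‖(e.symm : (LinearMap.ker (q : X →ₗ[ℝ] Z)) →L[ℝ] Y)‖ + 1 with hM
    have hMpos : (0 : ℝ) < M := by
      have := norm_nonneg (e.symm : (LinearMap.ker (q : X →ₗ[ℝ] Z)) →L[ℝ] Y)
      linarith
    have hib : ∀ y, M⁻¹ * ‖y‖ ≤ ‖i y‖ := by
      intro y
      have h1 : ‖y‖ ≤ (M - 1) * ‖e y‖ := by
        have h2 : y = e.symm (e y) := (e.symm_apply_apply y).symm
        calc ‖y‖ = ‖e.symm (e y)‖ := by rw [← h2]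
          _ ≤ (M - 1) * ‖e y‖ := by
              rw [hM]; ring_nf
              exact (e.symm : (LinearMap.ker (q : X →ₗ[ℝ] Z)) →L[ℝ] Y).le_opNorm _
      have h3 : ‖e y‖ = ‖i y‖ := rfl
      rw [h3] at h1
      have h4 : ‖y‖ ≤ M * ‖i y‖ := by nlinarith [norm_nonneg (i y)]
      have h5 := mul_le_mul_of_nonneg_left h4 (inv_nonneg.mpr hMpos.le)
      rwa [← mul_assoc, inv_mul_cancel₀ hMpos.ne', one_mul] at h5
    have hMinv : (0 : ℝ) < M⁻¹ := inv_pos.mpr hMpos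
    -- quantitative surjectivity of i*
    have hiq : ∀ g : StrongDual ℝ Y,
        ∃ f, dualMapCLM i f = g ∧ ‖f‖ ≤ (M⁻¹)⁻¹ * ‖g‖ := by
      intro g
      obtain ⟨f, hf1, hf2⟩ := dual_quantsurj hMinv i hib g
      exact ⟨f, ContinuousLinearMap.ext hf1, hf2⟩
    -- i** is bounded below
    have hidb : ∀ η : StrongDual ℝ (StrongDual ℝ Y),
        M⁻¹ * ‖η‖ ≤ ‖dualMapCLM (dualMapCLM i) η‖ := by
      intro η
      have h := dual_bdd_below (le_of_lt (inv_pos.mpr hMinv)) (dualMapCLM i)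
        (fun g => hiq g) η
      have h2 := mul_le_mul_of_nonneg_left h hMinv.le
      rwa [← mul_assoc, mul_inv_cancel₀ hMinv.ne', one_mul] at h2
    set P : StrongDual ℝ (StrongDual ℝ X) →L[ℝ]
        StrongDual ℝ (StrongDual ℝ X) :=
      ContinuousLinearMap.id ℝ _ - r.comp (dualMapCLM (dualMapCLM q)) with hP
    have hP2 : ∀ η, P (dualMapCLM (dualMapCLM i) η) = dualMapCLM (dualMapCLM i) η := by
      intro η
      have h0 : dualMapCLM (dualMapCLM q) (dualMapCLM (dualMapCLM i) η) = 0 := by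
        ext g
        have h1 : dualMapCLM i (dualMapCLM q g) = 0 := by
          ext y; simp [dualMapCLM_apply, hqi]
        show η (dualMapCLM i (dualMapCLM q g)) = 0
        rw [h1, map_zero]
      simp only [hP, ContinuousLinearMap.sub_apply, ContinuousLinearMap.id_apply,
        ContinuousLinearMap.comp_apply, h0, map_zero, sub_zero]
      show dualMapCLM (dualMapCLM i) η - r (dualMapCLM (dualMapCLM q) (dualMapCLM (dualMapCLM i) η)) = _
      rw [h0, map_zero, sub_zero]
    have hP1 : ∀ ξ, ∃ η, dualMapCLM (dualMapCLM i) η = P ξ := by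
      intro ξ
      have hker2 : dualMapCLM (dualMapCLM q) (P ξ) = 0 := by
        have h1 : dualMapCLM (dualMapCLM q) (P ξ)
            = dualMapCLM (dualMapCLM q) ξ
              - dualMapCLM (dualMapCLM q) (r (dualMapCLM (dualMapCLM q) ξ)) := by
          simp only [hP, ContinuousLinearMap.sub_apply, ContinuousLinearMap.id_apply,
            ContinuousLinearMap.comp_apply, map_sub]
          show dualMapCLM (dualMapCLM q) (ξ - r (dualMapCLM (dualMapCLM q) ξ)) = _
          rw [map_sub]
        rw [h1, hr, sub_self]
      have hvanish : ∀ φ : StrongDual ℝ X, dualMapCLM i φ = 0 → (P ξ) φ = 0 := by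
        intro φ hφ
        obtain ⟨g, hg⟩ := hfactor φ (fun y => by
          have := ContinuousLinearMap.ext_iff.mp hφ y
          simpa [dualMapCLM_apply] using this)
        have hφ2 : φ = dualMapCLM q g := ContinuousLinearMap.ext fun x => (hg x).symm
        rw [hφ2]
        exact ContinuousLinearMap.ext_iff.mp hker2 g
      obtain ⟨η, hη⟩ := factor_through (dualMapCLM i) (fun g => hiq g) (P ξ) hvanish
      exact ⟨η, ContinuousLinearMap.ext fun φ => hη φ⟩
    obtain ⟨u, hu⟩ := exists_left_inverse hMinv (dualMapCLM (dualMapCLM i)) hidb P hP1 hP2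
    refine ⟨(dualMapCLM (u.comp (NormedSpace.inclusionInDoubleDual ℝ X))).comp
      (NormedSpace.inclusionInDoubleDual ℝ (StrongDual ℝ Y)), ?_⟩
    intro g y
    show (u (NormedSpace.inclusionInDoubleDual ℝ X (i y))) g = g y
    have h1 : NormedSpace.inclusionInDoubleDual ℝ X (i y)
        = dualMapCLM (dualMapCLM i) (NormedSpace.inclusionInDoubleDual ℝ Y y) := by
      ext f; rfl
    rw [h1, hu]
    rfl

end
end

section
/- Let 0 → Y → X → E → 0 be an exact sequence of Banach spaces in which E is an L₁-space and X has the bounded approximation property. Then Y has the bounded approximation property. -/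
open scoped BigOperators

noncomputable section

set_option maxHeartbeats 1000000 in
/-- If `0 → Y → X → E → 0` is exact with `E` an `𝓛₁`-space and `X` has the BAP,
then `Y` has the BAP. -/
theorem statement12 {Y X E : Type*}
    [NormedAddCommGroup Y] [NormedSpace ℝ Y] [CompleteSpace Y]
    [NormedAddCommGroup X] [NormedSpace ℝ X] [CompleteSpace X]
    [NormedAddCommGroup E] [NormedSpace ℝ E] [CompleteSpace E]
    (i : Y →L[ℝ] X) (q : X →L[ℝ] E) (hexact : IsExactSeq i q)
    (hE : IsL1Space E) (hX : HasBAP X) : HasBAP Y := by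
  classical
  obtain ⟨hinj, hsurj, hrange⟩ := hexact
  obtain ⟨l, hl1, hL1⟩ := hE
  obtain ⟨μ, hμ1, hBAP⟩ := hX
  obtain ⟨C, hC0, hC⟩ := q.exists_preimage_norm_le hsurj
  haveI : CompleteSpace (LinearMap.ker (q : X →ₗ[ℝ] E)) :=
    (ContinuousLinearMap.isClosed_ker q).completeSpace_coe
  have hrange2 : LinearMap.range (i : Y →ₗ[ℝ] X) = LinearMap.ker (q : X →ₗ[ℝ] E) := hrange
  have hmemker : ∀ y : Y, i y ∈ LinearMap.ker (q : X →ₗ[ℝ] E) := by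
    intro y
    rw [← hrange2]
    exact ⟨y, rfl⟩
  set i' : Y →L[ℝ] LinearMap.ker (q : X →ₗ[ℝ] E) := i.codRestrict (LinearMap.ker (q : X →ₗ[ℝ] E)) hmemker with hi'def
  have hker' : LinearMap.ker (i' : Y →ₗ[ℝ] LinearMap.ker (q : X →ₗ[ℝ] E)) = ⊥ := by
    rw [LinearMap.ker_eq_bot']
    intro m hm
    apply hinj
    have : i m = 0 := congrArg Subtype.val hm
    rw [this, map_zero]
  have hrange' : LinearMap.range (i' : Y →ₗ[ℝ] LinearMap.ker (q : X →ₗ[ℝ] E)) = ⊤ := by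
    rw [LinearMap.range_eq_top]
    rintro ⟨x, hx⟩
    rw [← hrange2] at hx
    obtain ⟨y, hy⟩ := hx
    exact ⟨y, Subtype.ext hy⟩
  set e := ContinuousLinearEquiv.ofBijective i' hker' hrange' with hedef
  set D := ‖e.symm.toContinuousLinearMap‖ with hDdef
  refine ⟨max 1 (D * ((1 + C * l * ‖q‖) * (μ * ‖i‖))), le_max_left _ _, ?_⟩
  intro F hF
  haveI := hF
  obtain ⟨S, hSfin, hSnorm, hSfix⟩ := hBAP (F.map (i : Y →ₗ[ℝ] X)) inferInstance
  haveI := hSfin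
  obtain ⟨G, hGle, hGfin, n, Tiso, hTiso⟩ :=
    hL1 ((LinearMap.range (S : X →ₗ[ℝ] X)).map (q : X →ₗ[ℝ] E)) inferInstance
  haveI := hGfin
  -- basis vectors of ℓ₁ⁿ pulled back to G
  set v : Fin n → G := fun j =>
    Tiso.symm ((WithLp.equiv 1 (∀ _ : Fin n, ℝ)).symm (Pi.single j 1)) with hvdef
  choose x hx1 hx2 using fun j => hC ((v j : E))
  have hxnorm : ∀ j, ‖x j‖ ≤ C * ‖Tiso.symm.toContinuousLinearMap‖ := by
    intro j
    refine (hx2 j).trans ?_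
    have h1 : ‖(v j : E)‖ = ‖v j‖ := rfl
    have h2 : ‖v j‖ ≤ ‖Tiso.symm.toContinuousLinearMap‖ * 1 := by
      have := Tiso.symm.toContinuousLinearMap.le_opNorm
        ((WithLp.equiv 1 (∀ _ : Fin n, ℝ)).symm (Pi.single j 1))
      simpa [hvdef] using this
    have := mul_le_mul_of_nonneg_left ((h1.le.trans h2)) hC0.le
    simpa using this
  -- the lifting operator u : G → X
  set u0 : ↥G →ₗ[ℝ] X :=
    { toFun := fun g => ∑ j, WithLp.equiv 1 (∀ _ : Fin n, ℝ) (Tiso g) j • x j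
      map_add' := by
        intro a b
        simp [map_add, WithLp.ofLp_add, add_smul, Finset.sum_add_distrib]
      map_smul' := by
        intro c a
        simp [map_smul, WithLp.ofLp_smul, smul_smul, Finset.smul_sum] } with hu0def
  have hu0bound : ∀ g : G, ‖u0 g‖ ≤ C * l * ‖g‖ := by
    intro g
    have h1 : ‖u0 g‖ ≤ ∑ j, |WithLp.equiv 1 (∀ _ : Fin n, ℝ) (Tiso g) j| *
        (C * ‖Tiso.symm.toContinuousLinearMap‖) := by
      have hrfl : u0 g = ∑ j, WithLp.equiv 1 (∀ _ : Fin n, ℝ) (Tiso g) j • x j := rfl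
      rw [hrfl]
      refine (norm_sum_le Finset.univ fun j => WithLp.equiv 1 (∀ _ : Fin n, ℝ) (Tiso g) j • x j).trans ?_
      refine Finset.sum_le_sum fun j _ => ?_
      rw [norm_smul, Real.norm_eq_abs]
      exact mul_le_mul_of_nonneg_left (hxnorm j) (abs_nonneg _)
    rw [← Finset.sum_mul] at h1
    have h2 : ∑ j, |WithLp.equiv 1 (∀ _ : Fin n, ℝ) (Tiso g) j| = ‖Tiso g‖ := by
      rw [PiLp.norm_eq_sum (by norm_num : (0:ℝ) < (1 : ENNReal).toReal)]
      simp [Real.norm_eq_abs]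
    rw [h2] at h1
    have h3 : ‖Tiso g‖ ≤ ‖Tiso.toContinuousLinearMap‖ * ‖g‖ :=
      Tiso.toContinuousLinearMap.le_opNorm g
    calc ‖u0 g‖ ≤ ‖Tiso g‖ * (C * ‖Tiso.symm.toContinuousLinearMap‖) := h1
      _ ≤ (‖Tiso.toContinuousLinearMap‖ * ‖g‖) * (C * ‖Tiso.symm.toContinuousLinearMap‖) := by
          refine mul_le_mul_of_nonneg_right h3 (by positivity)
      _ = C * (‖Tiso.toContinuousLinearMap‖ * ‖Tiso.symm.toContinuousLinearMap‖) * ‖g‖ := by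
          ring
      _ ≤ C * l * ‖g‖ := by
          refine mul_le_mul_of_nonneg_right ?_ (norm_nonneg _)
          exact mul_le_mul_of_nonneg_left hTiso hC0.le
  set u : ↥G →L[ℝ] X := u0.mkContinuous (C * l) hu0bound with hudef
  -- q ∘ u is the inclusion of G
  have hz : ∀ z : PiLp 1 (fun _ : Fin n => ℝ),
      Tiso.symm z = ∑ j, WithLp.equiv 1 (∀ _ : Fin n, ℝ) z j • v j := by
    intro z
    have hz1 : z = ∑ j, WithLp.equiv 1 (∀ _ : Fin n, ℝ) z j •
        (WithLp.equiv 1 (∀ _ : Fin n, ℝ)).symm (Pi.single j 1) := by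
      apply (WithLp.linearEquiv 1 ℝ (∀ _ : Fin n, ℝ)).injective
      rw [map_sum]
      simp only [map_smul]
      have : ∀ j, (WithLp.linearEquiv 1 ℝ (∀ _ : Fin n, ℝ))
          ((WithLp.equiv 1 (∀ _ : Fin n, ℝ)).symm (Pi.single j 1)) = Pi.single j 1 := by
        intro j; rfl
      simp only [this]
      have : ∀ j, WithLp.equiv 1 (∀ _ : Fin n, ℝ) z j • (Pi.single j 1 : ∀ _ : Fin n, ℝ)
          = Pi.single j (WithLp.equiv 1 (∀ _ : Fin n, ℝ) z j) := by
        intro j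
        rw [← Pi.single_smul]
        simp
      simp only [this]
      rw [Finset.univ_sum_single]
      rfl
    conv_lhs => rw [hz1]
    rw [map_sum]
    simp only [map_smul]
    rfl
  have hqu : ∀ g : G, q (u g) = (g : E) := by
    intro g
    have h1 : q (u g) = ∑ j, WithLp.equiv 1 (∀ _ : Fin n, ℝ) (Tiso g) j • ((v j : G) : E) := by
      show q (u0 g) = _
      rw [hu0def]
      simp only [LinearMap.coe_mk, AddHom.coe_mk, map_sum, map_smul]
      refine Finset.sum_congr rfl fun j _ => ?_
      rw [hx1 j]
    rw [h1]
    have h2 : ∑ j, WithLp.equiv 1 (∀ _ : Fin n, ℝ) (Tiso g) j • ((v j : G) : E)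
        = ((∑ j, WithLp.equiv 1 (∀ _ : Fin n, ℝ) (Tiso g) j • v j : G) : E) := by
      push_cast
      rfl
    rw [h2, ← hz (Tiso g)]
    simp
  -- the map into G
  have hmemG : ∀ y : Y, q (S (i y)) ∈ G := by
    intro y
    exact hGle ⟨S (i y), ⟨i y, rfl⟩, rfl⟩
  set g0 : Y →L[ℝ] G := (q.comp (S.comp i)).codRestrict G hmemG with hg0def
  have hg0coe : ∀ y : Y, ((g0 y : G) : E) = q (S (i y)) := fun y => rfl
  set A : Y →L[ℝ] X := S.comp i - u.comp g0 with hAdef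
  have hAmem : ∀ y : Y, A y ∈ LinearMap.ker (q : X →ₗ[ℝ] E) := by
    intro y
    have : q (A y) = q (S (i y)) - q (u (g0 y)) := by
      simp [hAdef]
    rw [LinearMap.mem_ker]
    show q (A y) = 0
    rw [this, hqu (g0 y), hg0coe, sub_self]
  set B : Y →L[ℝ] LinearMap.ker (q : X →ₗ[ℝ] E) := A.codRestrict (LinearMap.ker (q : X →ₗ[ℝ] E)) hAmem with hBdef
  set T : Y →L[ℝ] Y := e.symm.toContinuousLinearMap.comp B with hTdef
  refine ⟨T, ?_, ?_, ?_⟩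
  · -- finite rank
    set W : Submodule ℝ X := LinearMap.range (S : X →ₗ[ℝ] X) ⊔ LinearMap.range u0 with hWdef
    haveI : FiniteDimensional ℝ W := inferInstance
    have hAW : ∀ y : Y, A y ∈ W := by
      intro y
      have h1 : S (i y) ∈ W := Submodule.mem_sup_left ⟨i y, rfl⟩
      have h2 : u (g0 y) ∈ W := Submodule.mem_sup_right ⟨g0 y, rfl⟩
      have : A y = S (i y) - u (g0 y) := by simp [hAdef]
      rw [this]
      exact Submodule.sub_mem _ h1 h2
    set W' : Submodule ℝ X := W ⊓ LinearMap.ker (q : X →ₗ[ℝ] E) with hW'def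
    haveI : FiniteDimensional ℝ W' := Submodule.finiteDimensional_of_le inf_le_left
    set g1 : ↥W' →ₗ[ℝ] Y :=
      (e.symm.toContinuousLinearMap : ↥(LinearMap.ker (q : X →ₗ[ℝ] E)) →ₗ[ℝ] Y) ∘ₗ
        Submodule.inclusion inf_le_right with hg1def
    have hle : LinearMap.range (T : Y →ₗ[ℝ] Y) ≤ LinearMap.range g1 := by
      rintro _ ⟨y, rfl⟩
      refine ⟨⟨A y, hAW y, hAmem y⟩, ?_⟩
      show e.symm (Submodule.inclusion inf_le_right ⟨A y, hAW y, hAmem y⟩) = T y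
      rfl
    exact Submodule.finiteDimensional_of_le hle
  · -- norm bound
    refine ContinuousLinearMap.opNorm_le_bound _ (le_trans zero_le_one (le_max_left _ _)) ?_
    intro y
    have h1 : ‖T y‖ ≤ D * ‖A y‖ := by
      have h1a : ‖T y‖ ≤ D * ‖B y‖ := e.symm.toContinuousLinearMap.le_opNorm (B y)
      have h1b : ‖B y‖ = ‖A y‖ := rfl
      rwa [h1b] at h1a
    have h2 : ‖A y‖ ≤ ‖S (i y)‖ + ‖u (g0 y)‖ := by
      have : A y = S (i y) - u (g0 y) := by simp [hAdef]
      rw [this]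
      exact norm_sub_le _ _
    have h3 : ‖S (i y)‖ ≤ μ * (‖i‖ * ‖y‖) := by
      have := S.le_opNorm (i y)
      have h3a := i.le_opNorm y
      calc ‖S (i y)‖ ≤ ‖S‖ * ‖i y‖ := this
        _ ≤ μ * (‖i‖ * ‖y‖) := by
            refine mul_le_mul hSnorm h3a (norm_nonneg _) (le_trans zero_le_one hμ1)
    have h4 : ‖u (g0 y)‖ ≤ C * l * (‖q‖ * (μ * (‖i‖ * ‖y‖))) := by
      have h4a : ‖u (g0 y)‖ ≤ C * l * ‖g0 y‖ := hu0bound (g0 y)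
      have h4b : ‖g0 y‖ = ‖q (S (i y))‖ := rfl
      have h4c : ‖q (S (i y))‖ ≤ ‖q‖ * ‖S (i y)‖ := q.le_opNorm _
      have h4d : ‖q‖ * ‖S (i y)‖ ≤ ‖q‖ * (μ * (‖i‖ * ‖y‖)) :=
        mul_le_mul_of_nonneg_left h3 (norm_nonneg _)
      calc ‖u (g0 y)‖ ≤ C * l * ‖g0 y‖ := h4a
        _ = C * l * ‖q (S (i y))‖ := by rw [h4b]
        _ ≤ C * l * (‖q‖ * (μ * (‖i‖ * ‖y‖))) := by
            refine mul_le_mul_of_nonneg_left (h4c.trans h4d) ?_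
            have : (0:ℝ) ≤ l := le_trans zero_le_one hl1
            positivity
    have hD0 : (0:ℝ) ≤ D := norm_nonneg _
    have key : ‖T y‖ ≤ D * ((1 + C * l * ‖q‖) * (μ * ‖i‖)) * ‖y‖ := by
      have h5 : ‖A y‖ ≤ (1 + C * l * ‖q‖) * (μ * ‖i‖) * ‖y‖ := by
        have := h2.trans (add_le_add h3 h4)
        calc ‖A y‖ ≤ μ * (‖i‖ * ‖y‖) + C * l * (‖q‖ * (μ * (‖i‖ * ‖y‖))) := this
          _ = (1 + C * l * ‖q‖) * (μ * ‖i‖) * ‖y‖ := by ring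
      calc ‖T y‖ ≤ D * ‖A y‖ := h1
        _ ≤ D * ((1 + C * l * ‖q‖) * (μ * ‖i‖) * ‖y‖) :=
            mul_le_mul_of_nonneg_left h5 hD0
        _ = D * ((1 + C * l * ‖q‖) * (μ * ‖i‖)) * ‖y‖ := by ring
    exact key.trans (mul_le_mul_of_nonneg_right (le_max_right _ _) (norm_nonneg _))
  · -- fixes F
    intro f hf
    have hSf : S (i f) = i f := hSfix (i f) (Submodule.mem_map_of_mem hf)
    have hqif : q (i f) = 0 := hmemker f
    have hg0f : (g0 f : G) = 0 := by
      apply Subtype.ext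
      show ((g0 f : G) : E) = 0
      rw [hg0coe, hSf, hqif]
    have hAf : A f = i f := by
      have : A f = S (i f) - u (g0 f) := by simp [hAdef]
      rw [this, hSf, hg0f, map_zero, sub_zero]
    have hBf : B f = i' f := by
      apply Subtype.ext
      show A f = i f
      exact hAf
    show e.symm (B f) = f
    rw [hBf]
    exact ContinuousLinearEquiv.ofBijective_symm_apply_apply i' hker' hrange' f

end
end

section
/- Let 0 → Y → E → Z → 0 be an exact sequence of Banach spaces in which E is an L∞-space and Y has the bounded approximation property. Then Z has the bounded approximation property. -/
open scoped BigOperators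

noncomputable section

set_option maxHeartbeats 1000000
set_option synthInstance.maxHeartbeats 400000

/-- Inverse bound for an injective linear map on a finite-dimensional normed space. -/
lemma aux_inv_bound {E F : Type*} [NormedAddCommGroup E] [NormedSpace ℝ E]
    [NormedAddCommGroup F] [NormedSpace ℝ F] [FiniteDimensional ℝ E]
    (f : E →ₗ[ℝ] F) (hf : Function.Injective f) :
    ∃ c : ℝ, 0 ≤ c ∧ ∀ x : E, ‖x‖ ≤ c * ‖f x‖ := by
  let e := LinearEquiv.ofInjective f hf
  let g : (LinearMap.range f) →L[ℝ] E := LinearMap.toContinuousLinearMap e.symm.toLinearMap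
  refine ⟨‖g‖, ContinuousLinearMap.opNorm_nonneg g, fun x => ?_⟩
  have h1 : g (e x) = x := by
    show e.symm (e x) = x
    exact e.symm_apply_apply x
  have h2 : ‖(e x : F)‖ = ‖f x‖ := by
    rw [LinearEquiv.ofInjective_apply]
  calc ‖x‖ = ‖g (e x)‖ := by rw [h1]
    _ ≤ ‖g‖ * ‖e x‖ := g.le_opNorm _
    _ = ‖g‖ * ‖f x‖ := by rw [Submodule.coe_norm, h2]

/-- Disjointness allows choosing a complement containing a given submodule. -/
lemma aux_compl {K V : Type*} [DivisionRing K] [AddCommGroup V] [Module K V]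
    (p q : Submodule K V) (h : Disjoint p q) :
    ∃ W : Submodule K V, q ≤ W ∧ IsCompl p W := by
  obtain ⟨U, hU⟩ := Submodule.exists_isCompl (p ⊔ q)
  refine ⟨q ⊔ U, le_sup_left, ?_, ?_⟩
  · rw [Submodule.disjoint_def]
    intro x hxp hxqU
    obtain ⟨b, hb, u, hu, rfl⟩ := Submodule.mem_sup.mp hxqU
    have hup : u ∈ p ⊔ q := by
      have he : u = (b + u) - b := by abel
      rw [he]
      exact Submodule.sub_mem _ (le_sup_left (α := Submodule K V) hxp)
        (le_sup_right (α := Submodule K V) hb)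
    have hu0 : u = 0 := (Submodule.disjoint_def.mp hU.disjoint) u hup hu
    rw [hu0, add_zero] at hxp ⊢
    exact (Submodule.disjoint_def.mp h) b hxp hb
  · rw [codisjoint_iff, ← sup_assoc]
    exact codisjoint_iff.mp hU.codisjoint

/-- Coordinates of `PiLp ⊤` are dominated by the norm. -/
lemma aux_coord_le {n : ℕ} (u : PiLp ⊤ fun _ : Fin n => ℝ) (k : Fin n) :
    ‖u k‖ ≤ ‖u‖ := by
  rw [PiLp.norm_eq_ciSup]
  exact le_ciSup (f := fun i => ‖u i‖) (Set.finite_range _).bddAbove k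

/-- Sup-norm bound for `PiLp ⊤` from coordinatewise bounds. -/
lemma aux_norm_le {n : ℕ} (u : PiLp ⊤ fun _ : Fin n => ℝ) {M : ℝ} (hM : 0 ≤ M)
    (h : ∀ k, ‖u k‖ ≤ M) : ‖u‖ ≤ M := by
  rw [PiLp.norm_eq_ciSup]
  rcases isEmpty_or_nonempty (Fin n) with h0 | h1
  · rw [iSup_of_empty', Real.sSup_empty]; exact hM
  · exact ciSup_le h

theorem statement13' {Y E Z : Type*}
    [NormedAddCommGroup Y] [NormedSpace ℝ Y] [CompleteSpace Y]
    [NormedAddCommGroup E] [NormedSpace ℝ E] [CompleteSpace E]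
    [NormedAddCommGroup Z] [NormedSpace ℝ Z] [CompleteSpace Z]
    (i : Y →L[ℝ] E) (q : E →L[ℝ] Z)
    (hi_inj : Function.Injective i) (hq_surj : Function.Surjective q)
    (hRK : LinearMap.range (i : Y →ₗ[ℝ] E) = LinearMap.ker (q : E →ₗ[ℝ] Z))
    (lam : ℝ) (hlam : 1 ≤ lam)
    (hEp : ∀ F : Submodule ℝ E, FiniteDimensional ℝ F →
      ∃ G : Submodule ℝ E, F ≤ G ∧ FiniteDimensional ℝ G ∧
        ∃ (n : ℕ) (T : G ≃L[ℝ] PiLp ⊤ fun _ : Fin n => ℝ),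
          ‖T.toContinuousLinearMap‖ * ‖T.symm.toContinuousLinearMap‖ ≤ lam)
    (mu : ℝ) (hmu : 1 ≤ mu) (hYB : HasBAPWith Y mu) :
    ∃ l : ℝ, 1 ≤ l ∧ HasBAPWith Z l := by
  obtain ⟨c₀, hc₀pos, hc₀⟩ := q.exists_preimage_norm_le hq_surj
  set R : Submodule ℝ E := LinearMap.range (i : Y →ₗ[ℝ] E) with hRdef
  have hmemR : ∀ y : Y, i y ∈ R := fun y => ⟨y, rfl⟩
  have hq0 : ∀ x ∈ R, q x = 0 := by
    intro x hx
    have h1 : x ∈ LinearMap.ker (q : E →ₗ[ℝ] Z) := hRK ▸ hx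
    simpa using h1
  have hqi : ∀ y : Y, q (i y) = 0 := fun y => hq0 _ (hmemR y)
  have hRclosed : IsClosed (R : Set E) := by
    have h1 : (R : Set E) = ⇑q ⁻¹' {0} := by
      ext x
      simp only [Set.mem_preimage, Set.mem_singleton_iff, SetLike.mem_coe]
      constructor
      · intro hx; exact hq0 x hx
      · intro hx
        show x ∈ R
        rw [hRK]
        exact LinearMap.mem_ker.mpr (by simpa using hx)
    rw [h1]; exact isClosed_singleton.preimage q.continuous
  haveI : CompleteSpace R := hRclosed.completeSpace_coe
  set i' : Y →L[ℝ] R := i.codRestrict R hmemR with hi'def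
  have hker : i'.ker = ⊥ := by
    rw [eq_bot_iff]
    intro a ha
    have h1 : i' a = 0 := LinearMap.mem_ker.mp ha
    have h2 : i a = 0 := by
      have h' : (i' a : E) = ((0 : R) : E) := by rw [h1]
      rw [show i a = (i' a : E) from rfl, h']
      simp
    have h3 : a = 0 := hi_inj (by rw [h2, map_zero])
    simp [h3]
  have htop : i'.range = ⊤ := by
    rw [eq_top_iff]
    rintro ⟨x, hx⟩ _
    obtain ⟨y, hy⟩ := hx
    exact ⟨y, Subtype.ext hy⟩
  set eqY : Y ≃L[ℝ] R := ContinuousLinearEquiv.ofBijective i' hker htop with heqY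
  set c₁ : ℝ := ‖(eqY.symm : R →L[ℝ] Y)‖ with hc₁def
  have hc₁0 : 0 ≤ c₁ := ContinuousLinearMap.opNorm_nonneg _
  have hc₁ : ∀ y : Y, ‖y‖ ≤ c₁ * ‖i y‖ := by
    intro y
    have h1 : eqY.symm (eqY y) = y := eqY.symm_apply_apply y
    have h2 : ‖eqY y‖ = ‖i y‖ := by
      rw [Submodule.coe_norm]
      rfl
    calc ‖y‖ = ‖eqY.symm (eqY y)‖ := by rw [h1]
      _ ≤ c₁ * ‖eqY y‖ := (eqY.symm : R →L[ℝ] Y).le_opNorm _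
      _ = c₁ * ‖i y‖ := by rw [h2]
  have hmu0 : (0:ℝ) ≤ mu + 1 := by linarith
  set C₂ : ℝ := 5 * c₁ * ‖i‖ * (mu + 1) + 1 with hC₂def
  have hC₂0 : 0 ≤ C₂ := by
    have h1 : (0:ℝ) ≤ 5 * c₁ * ‖i‖ * (mu + 1) := by positivity
    linarith
  have hlam0 : (0:ℝ) ≤ lam := by linarith
  set K : ℝ := ‖q‖ * (c₀ * (lam * C₂)) with hKdef
  have hK0 : 0 ≤ K := by positivity
  refine ⟨max 1 K, le_max_left _ _, ?_⟩
  intro F hF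
  haveI := hF
  -- Step 1: a linear lifting of F
  set bF := Module.finBasis ℝ F with hbFdef
  have hlift0 : ∀ j, ∃ x : E, q x = (bF j : Z) := fun j => hq_surj _
  choose xs hxs using hlift0
  set u₀ : F →ₗ[ℝ] E := (bF.constr ℝ) xs with hu₀def
  have hqu₀ : ∀ v : F, q (u₀ v) = (v : Z) := by
    have hL : ((q : E →ₗ[ℝ] Z).comp u₀) = F.subtype := by
      apply bF.ext
      intro j
      simp only [LinearMap.comp_apply, hu₀def, Module.Basis.constr_basis, Submodule.coe_subtype]
      simpa using hxs j
    intro v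
    have h := LinearMap.congr_fun hL v
    simpa using h
  set F₁ : Submodule ℝ E := LinearMap.range u₀ with hF₁def
  haveI : FiniteDimensional ℝ F₁ := inferInstance
  have hdisj : Disjoint R F₁ := by
    rw [Submodule.disjoint_def]
    intro x hxR hxF₁
    obtain ⟨v, hv⟩ := hxF₁
    have h0 : q x = 0 := hq0 x hxR
    rw [← hv] at h0 ⊢
    rw [hqu₀] at h0
    have hv0 : v = 0 := by exact_mod_cast h0
    rw [hv0, map_zero]
  -- Step 2: the constant c_F
  have hinjF : Function.Injective ((q : E →ₗ[ℝ] Z).comp F₁.subtype) := by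
    rw [← LinearMap.ker_eq_bot]
    rw [eq_bot_iff]
    rintro ⟨x, hx⟩ hk
    have hqx : q x = 0 := by simpa using hk
    have hxR : x ∈ R := by
      rw [hRK]
      exact LinearMap.mem_ker.mpr (by simpa using hqx)
    have : x = 0 := Submodule.disjoint_def.mp hdisj x hxR hx
    simpa using this
  obtain ⟨cF0, hcF00, hcF0b⟩ := aux_inv_bound ((q : E →ₗ[ℝ] Z).comp F₁.subtype) hinjF
  set cF : ℝ := cF0 * ‖q‖ with hcFdef
  have hcFnn : 0 ≤ cF := mul_nonneg hcF00 (norm_nonneg _)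
  have hcF : ∀ f ∈ F₁, ∀ x ∈ R, ‖f‖ ≤ cF * ‖x + f‖ := by
    intro f hf x hx
    have h1 : ‖(⟨f, hf⟩ : F₁)‖ ≤ cF0 * ‖q f‖ := by
      have := hcF0b ⟨f, hf⟩
      simpa using this
    have h2 : q f = q (x + f) := by rw [map_add, hq0 x hx, zero_add]
    calc ‖f‖ = ‖(⟨f, hf⟩ : F₁)‖ := rfl
      _ ≤ cF0 * ‖q f‖ := h1
      _ = cF0 * ‖q (x + f)‖ := by rw [h2]
      _ ≤ cF0 * (‖q‖ * ‖x + f‖) := by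
          exact mul_le_mul_of_nonneg_left (q.le_opNorm _) hcF00
      _ = cF * ‖x + f‖ := by rw [hcFdef]; ring
  -- Step 3: the finite net and the space D
  haveI : ProperSpace F₁ := FiniteDimensional.proper ℝ F₁
  have hKBcomp : IsCompact ((F₁ : Set E) ∩ Metric.closedBall 0 cF) := by
    have himg : (F₁ : Set E) ∩ Metric.closedBall 0 cF
        = (Subtype.val '' (Metric.closedBall (0 : F₁) cF)) := by
      ext x
      constructor
      · rintro ⟨hx1, hx2⟩
        refine ⟨⟨x, hx1⟩, ?_, rfl⟩
        rw [Metric.mem_closedBall, dist_zero_right] at hx2 ⊢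
        rw [Submodule.coe_norm]
        exact hx2
      · rintro ⟨⟨x, hx1⟩, hball, rfl⟩
        refine ⟨hx1, ?_⟩
        rw [Metric.mem_closedBall, dist_zero_right] at hball ⊢
        rw [Submodule.coe_norm] at hball
        exact hball
    rw [himg]
    exact (isCompact_closedBall _ _).image continuous_subtype_val
  obtain ⟨bnet, hbsub, hbfin, hbcover⟩ :=
    hKBcomp.elim_finite_subcover_image (fun g _ => Metric.isOpen_ball)
      (fun x hx => Set.mem_biUnion hx (Metric.mem_ball_self one_pos))
  have hychx : ∀ g : E, ∃ y' : Y, (∃ y'' : Y, ‖g - i y''‖ < 3) → ‖g - i y'‖ < 3 := by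
    intro g
    by_cases h : ∃ y'' : Y, ‖g - i y''‖ < 3
    · exact ⟨h.choose, fun _ => h.choose_spec⟩
    · exact ⟨0, fun hc => absurd hc h⟩
  choose ych hych using hychx
  set D : Submodule ℝ Y := Submodule.span ℝ (ych '' bnet) with hDdef
  haveI : FiniteDimensional ℝ D := FiniteDimensional.span_of_finite ℝ (hbfin.image _)
  have hDbase : ∀ (y : Y) (f : E), f ∈ F₁ → ‖i y + f‖ ≤ 1 → ∃ d ∈ D, ‖i y - i d‖ ≤ 5 := by
    intro y f hf h1
    have hfK : f ∈ (F₁ : Set E) ∩ Metric.closedBall 0 cF := by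
      refine ⟨hf, ?_⟩
      rw [Metric.mem_closedBall, dist_zero_right]
      calc ‖f‖ ≤ cF * ‖i y + f‖ := hcF f hf (i y) (hmemR y)
        _ ≤ cF * 1 := mul_le_mul_of_nonneg_left h1 hcFnn
        _ = cF := mul_one cF
    have hcov := hbcover hfK
    rw [Set.mem_iUnion₂] at hcov
    obtain ⟨g, hg, hfg⟩ := hcov
    rw [Metric.mem_ball, dist_eq_norm] at hfg
    have hex : ∃ y'' : Y, ‖g - i y''‖ < 3 := by
      refine ⟨-y, ?_⟩
      have he : g - i (-y) = (g - f) + (i y + f) := by rw [map_neg]; abel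
      rw [he]
      calc ‖(g - f) + (i y + f)‖ ≤ ‖g - f‖ + ‖i y + f‖ := norm_add_le _ _
        _ < 1 + 1 := by
            apply add_lt_add_of_lt_of_le _ h1
            rw [norm_sub_rev]; exact hfg
        _ < 3 := by norm_num
    have h3 := hych g hex
    refine ⟨-(ych g),
      Submodule.neg_mem D (Submodule.subset_span (Set.mem_image_of_mem _ hg)), ?_⟩
    have he2 : i y - i (-(ych g)) = (i y + f) + (g - f) + (i (ych g) - g) := by
      rw [map_neg]; abel
    rw [he2]
    calc ‖(i y + f) + (g - f) + (i (ych g) - g)‖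
        ≤ ‖i y + f‖ + ‖g - f‖ + ‖i (ych g) - g‖ := norm_add₃_le
      _ ≤ 1 + 1 + 3 := by
          refine add_le_add (add_le_add h1 ?_) ?_
          · rw [norm_sub_rev]; exact hfg.le
          · rw [norm_sub_rev]; exact h3.le
      _ = 5 := by norm_num
  have hD : ∀ (y : Y) (f : E), f ∈ F₁ → ∃ d ∈ D, ‖i y - i d‖ ≤ 5 * ‖i y + f‖ := by
    intro y f hf
    rcases eq_or_ne (‖i y + f‖) 0 with ht | ht
    · have h0 : i y + f = 0 := norm_eq_zero.mp ht
      have hyF : i y ∈ F₁ := by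
        have he : i y = -f := eq_neg_of_add_eq_zero_left h0
        rw [he]; exact F₁.neg_mem hf
      have hy0 : i y = 0 := Submodule.disjoint_def.mp hdisj _ (hmemR y) hyF
      refine ⟨0, D.zero_mem, ?_⟩
      rw [map_zero, sub_zero, hy0, norm_zero]
      positivity
    · set t : ℝ := ‖i y + f‖ with htdef
      have htpos : 0 < t := lt_of_le_of_ne (norm_nonneg _) (Ne.symm ht)
      have h1 : ‖i (t⁻¹ • y) + t⁻¹ • f‖ ≤ 1 := by
        rw [map_smul, ← smul_add, norm_smul, Real.norm_eq_abs,
          abs_of_pos (inv_pos.mpr htpos), ← htdef, inv_mul_cancel₀ ht]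
      obtain ⟨d, hd, h5⟩ := hDbase (t⁻¹ • y) (t⁻¹ • f) (F₁.smul_mem _ hf) h1
      refine ⟨t • d, D.smul_mem _ hd, ?_⟩
      have he : i y - i (t • d) = t • (i (t⁻¹ • y) - i d) := by
        rw [map_smul, map_smul, smul_sub, smul_smul, mul_inv_cancel₀ ht, one_smul]
      rw [he, norm_smul, Real.norm_eq_abs, abs_of_pos htpos]
      calc t * ‖i (t⁻¹ • y) - i d‖ ≤ t * 5 := mul_le_mul_of_nonneg_left h5 htpos.le
        _ = 5 * t := by ring
  -- Step 4: BAP of Y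
  obtain ⟨S, hSfin, hSnorm, hSfix⟩ := hYB D inferInstance
  -- Step 5: the L∞ structure
  haveI : FiniteDimensional ℝ
      (Submodule.map (i : Y →ₗ[ℝ] E) (LinearMap.range (S : Y →ₗ[ℝ] Y))) := by
    haveI := hSfin
    infer_instance
  set H : Submodule ℝ E :=
    F₁ ⊔ Submodule.map (i : Y →ₗ[ℝ] E) (LinearMap.range (S : Y →ₗ[ℝ] Y)) with hHdef
  haveI : FiniteDimensional ℝ H := inferInstance
  obtain ⟨G, hHG, hGfin, n, T, hT⟩ := hEp H inferInstance
  haveI := hGfin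
  -- Step 6: the map w₀
  obtain ⟨W, hF₁W, hcompl⟩ := aux_compl R F₁ hdisj
  set prj : E →ₗ[ℝ] R := Submodule.linearProjOfIsCompl R W hcompl with hprj
  set A : R →L[ℝ] E := i.comp (S.comp (eqY.symm : R →L[ℝ] Y)) with hA
  set w₀ : E →ₗ[ℝ] E :=
    (A : R →ₗ[ℝ] E).comp prj + (LinearMap.id - R.subtype.comp prj) with hw₀def
  have hw₀R : ∀ y : Y, w₀ (i y) = i (S y) := by
    intro y
    have hm : i y ∈ R := hmemR y
    have hπ : prj (i y) = ⟨i y, hm⟩ := by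
      have h := Submodule.linearProjOfIsCompl_apply_left hcompl ⟨i y, hm⟩
      exact h
    have he : eqY.symm ⟨i y, hm⟩ = y := by
      rw [ContinuousLinearEquiv.symm_apply_eq]
      apply Subtype.ext
      rfl
    simp only [hw₀def, LinearMap.add_apply, LinearMap.comp_apply, LinearMap.sub_apply,
      LinearMap.id_apply, hπ, Submodule.coe_subtype]
    have hAv : A ⟨i y, hm⟩ = i (S y) := by
      rw [hA]
      simp only [ContinuousLinearMap.comp_apply]
      rw [show ((eqY.symm : R →L[ℝ] Y) ⟨i y, hm⟩) = y from he]
    rw [show ((A : R →ₗ[ℝ] E) ⟨i y, hm⟩) = i (S y) from hAv]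
    simp
  have hw₀W : ∀ x ∈ W, w₀ x = x := by
    intro x hx
    have hπ : prj x = 0 := Submodule.linearProjOfIsCompl_apply_right' hcompl hx
    simp only [hw₀def, LinearMap.add_apply, LinearMap.comp_apply, LinearMap.sub_apply,
      LinearMap.id_apply, hπ, map_zero, Submodule.coe_subtype, Submodule.coe_zero]
    simp
  set VL : Submodule ℝ E := R ⊔ F₁ with hVLdef
  have hdecomp : ∀ x ∈ VL, ∃ (ya : Y) (b : E), b ∈ F₁ ∧ x = i ya + b ∧
      w₀ x = i (S ya) + b := by
    intro x hx
    obtain ⟨a, ha, b, hb, hab⟩ := Submodule.mem_sup.mp hx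
    obtain ⟨ya, hya⟩ := ha
    have hya' : i ya = a := hya
    refine ⟨ya, b, hb, by rw [hya', hab], ?_⟩
    have h1 : w₀ x = w₀ a + w₀ b := by rw [← hab, map_add]
    rw [h1, ← hya', hw₀R, hw₀W b (hF₁W hb)]
  have hbound : ∀ x ∈ VL, w₀ x ∈ G ∧ ‖w₀ x‖ ≤ C₂ * ‖x‖ := by
    intro x hx
    obtain ⟨ya, b, hb, hxe, hwe⟩ := hdecomp x hx
    constructor
    · rw [hwe]
      apply G.add_mem
      · apply hHG
        apply Submodule.mem_sup_right
        exact ⟨S ya, LinearMap.mem_range_self _ _, rfl⟩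
      · exact hHG (Submodule.mem_sup_left hb)
    · obtain ⟨d, hd, h5⟩ := hD ya b hb
      have h5' : ‖i ya - i d‖ ≤ 5 * ‖x‖ := by rw [hxe]; exact h5
      have hkey : w₀ x = (i (S ya) - i ya) + x := by rw [hwe, hxe]; abel
      have hSd : S (ya - d) - (ya - d) = S ya - ya := by
        rw [map_sub, hSfix d hd]; abel
      have he1 : i (S ya) - i ya = i (S (ya - d) - (ya - d)) := by
        rw [hSd, map_sub]
      have hyadb : ‖ya - d‖ ≤ c₁ * (5 * ‖x‖) := by
        calc ‖ya - d‖ ≤ c₁ * ‖i (ya - d)‖ := hc₁ _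
          _ = c₁ * ‖i ya - i d‖ := by rw [map_sub]
          _ ≤ c₁ * (5 * ‖x‖) := mul_le_mul_of_nonneg_left h5' hc₁0
      have he2 : ‖i (S (ya - d) - (ya - d))‖ ≤ ‖i‖ * ((mu + 1) * (c₁ * (5 * ‖x‖))) := by
        calc ‖i (S (ya - d) - (ya - d))‖ ≤ ‖i‖ * ‖S (ya - d) - (ya - d)‖ := i.le_opNorm _
          _ ≤ ‖i‖ * ((mu + 1) * ‖ya - d‖) := by
              apply mul_le_mul_of_nonneg_left _ (norm_nonneg i)
              calc ‖S (ya - d) - (ya - d)‖ ≤ ‖S (ya - d)‖ + ‖ya - d‖ := norm_sub_le _ _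
                _ ≤ ‖S‖ * ‖ya - d‖ + ‖ya - d‖ :=
                    add_le_add_left (S.le_opNorm _) _
                _ ≤ mu * ‖ya - d‖ + ‖ya - d‖ :=
                    add_le_add_left
                      (mul_le_mul_of_nonneg_right hSnorm (norm_nonneg _)) _
                _ = (mu + 1) * ‖ya - d‖ := by ring
          _ ≤ ‖i‖ * ((mu + 1) * (c₁ * (5 * ‖x‖))) := by
              apply mul_le_mul_of_nonneg_left _ (norm_nonneg i)
              exact mul_le_mul_of_nonneg_left hyadb hmu0
      calc ‖w₀ x‖ = ‖(i (S ya) - i ya) + x‖ := by rw [hkey]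
        _ ≤ ‖i (S ya) - i ya‖ + ‖x‖ := norm_add_le _ _
        _ ≤ ‖i‖ * ((mu + 1) * (c₁ * (5 * ‖x‖))) + ‖x‖ := by
            rw [he1]; exact add_le_add_left he2 _
        _ = C₂ * ‖x‖ := by rw [hC₂def]; ring
  -- Step 7: extension through the ℓ∞ⁿ-structure
  set wL : VL →ₗ[ℝ] G :=
    LinearMap.codRestrict G (w₀.domRestrict VL) (fun v => (hbound v v.2).1) with hwLdef
  have hwLb : ∀ v : VL, ‖wL v‖ ≤ C₂ * ‖v‖ := by
    intro v
    have h1 : ‖wL v‖ = ‖w₀ (v : E)‖ := by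
      rw [Submodule.coe_norm]
      rfl
    rw [h1, Submodule.coe_norm]
    exact (hbound v v.2).2
  set wG : VL →L[ℝ] G := LinearMap.mkContinuous wL C₂ hwLb with hwGdef
  set ψ : Fin n → (VL →L[ℝ] ℝ) := fun k =>
    (PiLp.proj ⊤ (fun _ : Fin n => ℝ) k).comp (T.toContinuousLinearMap.comp wG) with hψdef
  have hψapp : ∀ (k : Fin n) (v : VL), ψ k v = (T (wG v)) k := fun k v => rfl
  have hψnorm : ∀ k, ‖ψ k‖ ≤ ‖T.toContinuousLinearMap‖ * C₂ := by
    intro k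
    apply ContinuousLinearMap.opNorm_le_bound _
      (mul_nonneg (ContinuousLinearMap.opNorm_nonneg _) hC₂0)
    intro v
    rw [hψapp]
    calc ‖(T (wG v)) k‖ ≤ ‖T (wG v)‖ := aux_coord_le _ k
      _ ≤ ‖T.toContinuousLinearMap‖ * ‖wG v‖ := T.toContinuousLinearMap.le_opNorm _
      _ ≤ ‖T.toContinuousLinearMap‖ * (C₂ * ‖v‖) :=
          mul_le_mul_of_nonneg_left (hwLb v) (ContinuousLinearMap.opNorm_nonneg _)
      _ = ‖T.toContinuousLinearMap‖ * C₂ * ‖v‖ := by ring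
  have hHB : ∀ k, ∃ g : E →L[ℝ] ℝ, (∀ x : VL, g x = ψ k x) ∧ ‖g‖ = ‖ψ k‖ :=
    fun k => exists_extension_norm_eq VL (ψ k)
  choose Ψ hΨ hΨn using hHB
  set Φ : E →L[ℝ] PiLp ⊤ (fun _ : Fin n => ℝ) :=
    (PiLp.continuousLinearEquiv ⊤ ℝ (fun _ : Fin n => ℝ)).symm.toContinuousLinearMap.comp
      (ContinuousLinearMap.pi Ψ) with hΦdef
  have hΦapp : ∀ (x : E) (k : Fin n), Φ x k = Ψ k x := fun x k => rfl
  set J : E →L[ℝ] E := G.subtypeL.comp (T.symm.toContinuousLinearMap.comp Φ) with hJdef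
  have hJval : ∀ x : E, J x = ((T.symm (Φ x) : G) : E) := fun x => rfl
  have hJmem : ∀ x : E, J x ∈ G := by
    intro x
    rw [hJval]
    exact (T.symm (Φ x)).2
  have hJeq : ∀ x : E, x ∈ VL → J x = w₀ x := by
    intro x hx
    have h1 : Φ x = T (wG ⟨x, hx⟩) := by
      ext k
      rw [hΦapp, hΨ k ⟨x, hx⟩, hψapp]
    rw [hJval, h1, T.symm_apply_apply]
    rfl
  have hJnorm : ∀ x : E, ‖J x‖ ≤ lam * C₂ * ‖x‖ := by
    intro x
    have hΦb : ‖Φ x‖ ≤ ‖T.toContinuousLinearMap‖ * C₂ * ‖x‖ := by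
      apply aux_norm_le _ (by positivity)
      intro k
      rw [hΦapp]
      calc ‖Ψ k x‖ ≤ ‖Ψ k‖ * ‖x‖ := (Ψ k).le_opNorm x
        _ ≤ ‖T.toContinuousLinearMap‖ * C₂ * ‖x‖ := by
            apply mul_le_mul_of_nonneg_right _ (norm_nonneg x)
            rw [hΨn k]; exact hψnorm k
    have h0 : ‖J x‖ = ‖T.symm (Φ x)‖ := by
      rw [hJval, ← Submodule.coe_norm]
    calc ‖J x‖ = ‖T.symm (Φ x)‖ := h0
      _ ≤ ‖T.symm.toContinuousLinearMap‖ * ‖Φ x‖ :=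
          T.symm.toContinuousLinearMap.le_opNorm _
      _ ≤ ‖T.symm.toContinuousLinearMap‖ * (‖T.toContinuousLinearMap‖ * C₂ * ‖x‖) :=
          mul_le_mul_of_nonneg_left hΦb (ContinuousLinearMap.opNorm_nonneg _)
      _ = (‖T.toContinuousLinearMap‖ * ‖T.symm.toContinuousLinearMap‖) * (C₂ * ‖x‖) := by
          ring
      _ ≤ lam * (C₂ * ‖x‖) := by
          apply mul_le_mul_of_nonneg_right hT
          positivity
      _ = lam * C₂ * ‖x‖ := by ring
  -- Step 8: descend to Z
  choose lf hlf1 hlf2 using hc₀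
  have hWD : ∀ x x' : E, q x = q x' → q (J x) = q (J x') := by
    intro x x' hqq
    have hdR : x - x' ∈ R := by
      rw [hRK]
      exact LinearMap.mem_ker.mpr (by simp [map_sub, hqq])
    obtain ⟨y, hy⟩ := hdR
    have hy' : i y = x - x' := hy
    have h1 : J (x - x') = i (S y) := by
      rw [← hy', hJeq (i y) (Submodule.mem_sup_left (hmemR y))]
      exact hw₀R y
    have h2 : q (J x) - q (J x') = q (J (x - x')) := by
      rw [map_sub, map_sub]
    have h3 : q (J (x - x')) = 0 := by rw [h1, hqi]
    have h4 : q (J x) - q (J x') = 0 := h2.trans h3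
    exact sub_eq_zero.mp h4
  set TZl : Z →ₗ[ℝ] Z :=
    { toFun := fun z => q (J (lf z)),
      map_add' := by
        intro z w
        have h1 : q (lf (z + w)) = q (lf z + lf w) := by
          rw [map_add, hlf1, hlf1, hlf1]
        show q (J (lf (z + w))) = q (J (lf z)) + q (J (lf w))
        rw [hWD _ _ h1, map_add, map_add]
      map_smul' := by
        intro c z
        have h1 : q (lf (c • z)) = q (c • lf z) := by
          rw [map_smul, hlf1, hlf1]
        show q (J (lf (c • z))) = c • q (J (lf z))
        rw [hWD _ _ h1, map_smul, map_smul] } with hTZldef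
  have hTZb : ∀ z, ‖TZl z‖ ≤ K * ‖z‖ := by
    intro z
    have h0 : TZl z = q (J (lf z)) := rfl
    rw [h0, hKdef]
    calc ‖q (J (lf z))‖ ≤ ‖q‖ * ‖J (lf z)‖ := q.le_opNorm _
      _ ≤ ‖q‖ * (lam * C₂ * ‖lf z‖) :=
          mul_le_mul_of_nonneg_left (hJnorm _) (ContinuousLinearMap.opNorm_nonneg _)
      _ ≤ ‖q‖ * (lam * C₂ * (c₀ * ‖z‖)) := by
          apply mul_le_mul_of_nonneg_left _ (ContinuousLinearMap.opNorm_nonneg _)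
          exact mul_le_mul_of_nonneg_left (hlf2 z) (by positivity)
      _ = ‖q‖ * (c₀ * (lam * C₂)) * ‖z‖ := by ring
  set TZ : Z →L[ℝ] Z := TZl.mkContinuous K hTZb with hTZdef
  refine ⟨TZ, ?_, ?_, ?_⟩
  · have hle : LinearMap.range (TZ : Z →ₗ[ℝ] Z) ≤ Submodule.map (q : E →ₗ[ℝ] Z) G := by
      rintro z ⟨z₀, rfl⟩
      exact ⟨J (lf z₀), hJmem _, rfl⟩
    haveI : FiniteDimensional ℝ (Submodule.map (q : E →ₗ[ℝ] Z) G) := inferInstance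
    exact Submodule.finiteDimensional_of_le hle
  · calc ‖TZ‖ ≤ K := TZl.mkContinuous_norm_le hK0 hTZb
      _ ≤ max 1 K := le_max_right _ _
  · intro f hf
    have hmem1 : u₀ ⟨f, hf⟩ ∈ F₁ := ⟨⟨f, hf⟩, rfl⟩
    have hx1 : u₀ ⟨f, hf⟩ ∈ VL := Submodule.mem_sup_right hmem1
    have h1 : q (lf f) = q (u₀ ⟨f, hf⟩) := by rw [hlf1, hqu₀]
    have h2 : TZ f = q (J (lf f)) := rfl
    rw [h2, hWD _ _ h1, hJeq _ hx1, hw₀W _ (hF₁W hmem1), hqu₀]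


/-- Figiel–Johnson–Pełczyński: if `0 → Y → E → Z → 0` is exact with `E` an
`𝓛∞`-space and `Y` has the BAP, then `Z` has the BAP. -/
theorem statement13 {Y E Z : Type*}
    [NormedAddCommGroup Y] [NormedSpace ℝ Y] [CompleteSpace Y]
    [NormedAddCommGroup E] [NormedSpace ℝ E] [CompleteSpace E]
    [NormedAddCommGroup Z] [NormedSpace ℝ Z] [CompleteSpace Z]
    (i : Y →L[ℝ] E) (q : E →L[ℝ] Z) (hexact : IsExactSeq i q)
    (hE : IsLinftySpace E) (hY : HasBAP Y) : HasBAP Z := by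
  obtain ⟨hi_inj, hq_surj, hRK⟩ := hexact
  obtain ⟨lam, hlam, hEp⟩ := hE
  obtain ⟨mu, hmu, hYB⟩ := hY
  exact statement13' i q hi_inj hq_surj hRK lam hlam hEp mu hmu hYB

end
end
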